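/- arXiv:1707.05440 — 3 statements merged into one kernel-verified Lean document; each statement's English description precedes it below -/
import Mathlib

section
/- For every n ≥ 2, the edge set of the complete geometric graph on the regular wheel configuration W_{2n} (all C(2n,2) segments between pairs of points of W_{2n}) can be partitioned into n classes such that each class is a plane spanning tree of W_{2n}. -/
/-- Points in the plane. -/
abbrev Pt : Type := ℝ × ℝ

/-- A finite point set is in general position if no three of its points are collinear. -/
def GenPos (S : Finset Pt) : Prop :=
  ∀ p ∈ S, ∀ q ∈ S, ∀ r ∈ S, p ≠ q → p ≠ r → q ≠ r →
    ¬ Collinear ℝ ({p, q, r} : Set Pt)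

/-- A geometric graph on `S` (a simple graph on the points of `S`, edges drawn as
straight segments) is plane if the open segments of any two distinct edges are disjoint. -/
def IsPlaneGraph {S : Finset Pt} (G : SimpleGraph {x // x ∈ S}) : Prop :=
  ∀ a b c d : {x // x ∈ S}, G.Adj a b → G.Adj c d → s(a, b) ≠ s(c, d) →
    openSegment ℝ (a : Pt) (b : Pt) ∩ openSegment ℝ (c : Pt) (d : Pt) = ∅

/-- A plane spanning tree of `S`: a tree on all points of `S` drawn without crossings. -/
def IsPlaneSpanningTree {S : Finset Pt} (G : SimpleGraph {x // x ∈ S}) : Prop :=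
  G.IsTree ∧ IsPlaneGraph G

/-- A plane spanning path of `S`: a plane spanning tree in which every vertex
has degree at most two (i.e. a plane Hamiltonian path). -/
def IsPlaneSpanningPath {S : Finset Pt} (G : SimpleGraph {x // x ∈ S}) : Prop :=
  IsPlaneSpanningTree G ∧
    ∀ v a b c : {x // x ∈ S}, G.Adj v a → G.Adj v b → G.Adj v c →
      (a = b ∨ a = c ∨ b = c)

/-- The open segment spanned by an unordered pair of points. -/
def segOpen (e : Sym2 Pt) : Set Pt :=
  Sym2.lift ⟨fun a b => openSegment ℝ a b, fun a b => openSegment_symm ℝ a b⟩ e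

/-- `F` is a crossing family in `S`: a set of nondegenerate segments with endpoints
in `S`, any two of which cross (their open segments intersect). -/
def IsCrossingFamily (S : Finset Pt) (F : Finset (Sym2 Pt)) : Prop :=
  (∀ e ∈ F, ¬ e.IsDiag ∧ ∀ x ∈ e, x ∈ S) ∧
  (∀ e ∈ F, ∀ f ∈ F, e ≠ f → (segOpen e ∩ segOpen f).Nonempty)

/-- `x` lies strictly to the left of the directed line from `p` to `q`. -/
def leftOf (p q x : Pt) : Prop :=
  0 < (q.1 - p.1) * (x.2 - p.2) - (q.2 - p.2) * (x.1 - p.1)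

/-- `x` lies strictly to the right of the directed line from `p` to `q`. -/
def rightOf (p q x : Pt) : Prop :=
  (q.1 - p.1) * (x.2 - p.2) - (q.2 - p.2) * (x.1 - p.1) < 0

/-- The double star on `S` associated with the directed edge `pq`: the edge `pq`,
the edges from `p` to all points strictly left of the directed line `pq`, and the
edges from `q` to all points strictly right of it. -/
def doubleStar (S : Finset Pt) (p q : Pt) : SimpleGraph {x // x ∈ S} :=
  SimpleGraph.fromRel fun a b =>
    ((a : Pt) = p ∧ (b : Pt) = q) ∨
    ((a : Pt) = p ∧ leftOf p q (b : Pt)) ∨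
    ((a : Pt) = q ∧ rightOf p q (b : Pt))

/-- The regular wheel configuration `W_{2n}`: `2n-1` points regularly spaced on the
unit circle together with its center. -/
noncomputable def wheel (n : ℕ) : Finset Pt :=
  insert ((0 : ℝ), (0 : ℝ)) <| (Finset.range (2 * n - 1)).image fun j : ℕ =>
    (Real.cos (2 * Real.pi * (j : ℝ) / ((2 * n - 1 : ℕ) : ℝ)),
     Real.sin (2 * Real.pi * (j : ℝ) / ((2 * n - 1 : ℕ) : ℝ)))

/-! ### Auxiliary geometric machinery -/

open Real

/-- orientation determinant -/
private def det3 (p q x : Pt) : ℝ := (q.1 - p.1) * (x.2 - p.2) - (q.2 - p.2) * (x.1 - p.1)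

private lemma det3_cyclic (p q x : Pt) : det3 p q x = det3 q x p := by unfold det3; ring

private lemma det3_swap12 (p q x : Pt) : det3 p q x = - det3 q p x := by unfold det3; ring

private lemma det3_self (p x : Pt) : det3 p p x = 0 := by unfold det3; ring

private lemma det3_end (p q : Pt) : det3 p q p = 0 := by unfold det3; ring

private lemma det3_zero_of_mem {p q : Pt} {y : Pt} (hy : y ∈ openSegment ℝ p q) :
    det3 p q y = 0 := by
  obtain ⟨a, b, ha, hb, hab, rfl⟩ := hy
  have h1 : (a • p + b • q).1 = a * p.1 + b * q.1 := rfl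
  have h2 : (a • p + b • q).2 = a * p.2 + b * q.2 := rfl
  unfold det3
  rw [h1, h2]
  have : b = 1 - a := by linarith
  subst this; ring

private lemma det3_affine {p q r s : Pt} {y : Pt} (hy : y ∈ openSegment ℝ r s) :
    ∃ a b : ℝ, 0 < a ∧ 0 < b ∧ a + b = 1 ∧
      det3 p q y = a * det3 p q r + b * det3 p q s := by
  obtain ⟨a, b, ha, hb, hab, rfl⟩ := hy
  refine ⟨a, b, ha, hb, hab, ?_⟩
  have h1 : (a • r + b • s).1 = a * r.1 + b * s.1 := rfl
  have h2 : (a • r + b • s).2 = a * r.2 + b * s.2 := rfl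
  unfold det3
  rw [h1, h2]
  have : b = 1 - a := by linarith
  subst this; ring

private lemma seg_disjoint_of_side {p q r s : Pt} (hr : 0 < det3 p q r) (hs : 0 < det3 p q s) :
    openSegment ℝ p q ∩ openSegment ℝ r s = ∅ := by
  rw [Set.eq_empty_iff_forall_notMem]
  rintro y ⟨h1, h2⟩
  have hz := det3_zero_of_mem h1
  obtain ⟨a, b, ha, hb, hab, he⟩ := det3_affine (p := p) (q := q) h2
  nlinarith

private lemma seg_disjoint_of_shared {p q r : Pt} (h : det3 p q r ≠ 0) :
    openSegment ℝ p q ∩ openSegment ℝ p r = ∅ := by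
  rw [Set.eq_empty_iff_forall_notMem]
  rintro y ⟨h1, h2⟩
  have hz := det3_zero_of_mem h1
  obtain ⟨a, b, ha, hb, hab, he⟩ := det3_affine (p := p) (q := q) h2
  rw [det3_end] at he
  have hby : det3 p q y = b * det3 p q r := by linarith
  rw [hz] at hby
  rcases h.lt_or_gt with hlt | hlt
  · nlinarith
  · nlinarith

private lemma sin_triple (a b : ℝ) :
    sin (2*a) + sin (2*b) - sin (2*a + 2*b) = 4 * sin a * sin b * sin (a + b) := by
  have pa := sin_sq_add_cos_sq a
  have pb := sin_sq_add_cos_sq b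
  rw [show 2*a + 2*b = 2*(a+b) by ring, sin_two_mul, sin_two_mul, sin_two_mul,
    sin_add, cos_add]
  linear_combination (-2*sin a*cos a) * pb + (-2*sin b*cos b) * pa

private lemma det3_circle (α β ξ : ℝ) :
    det3 (cos α, sin α) (cos β, sin β) (cos ξ, sin ξ) =
      4 * sin ((β - α)/2) * sin ((ξ - β)/2) * sin ((ξ - α)/2) := by
  have h1 : det3 (cos α, sin α) (cos β, sin β) (cos ξ, sin ξ)
      = sin (β - α) + sin (ξ - β) - sin (ξ - α) := by
    rw [sin_sub, sin_sub, sin_sub]; unfold det3; dsimp only; ring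
  have h2 := sin_triple ((β - α)/2) ((ξ - β)/2)
  rw [show 2*((β - α)/2) = β - α by ring, show 2*((ξ - β)/2) = ξ - β by ring] at h2
  rw [show β - α + (ξ - β) = ξ - α by ring] at h2
  rw [show (β - α)/2 + (ξ - β)/2 = (ξ - α)/2 by ring] at h2
  rw [h1, h2]

private lemma det3_circle_center (α β : ℝ) :
    det3 (cos α, sin α) (cos β, sin β) ((0:ℝ), (0:ℝ)) = sin (β - α) := by
  rw [sin_sub]; unfold det3; dsimp only; ring

noncomputable section
namespace WheelAux

/-- the real number `2n-1` -/
def M (n : ℕ) : ℝ := ((2 * n - 1 : ℕ) : ℝ)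

/-- the `j`-th point of the regular `(2n-1)`-gon -/
def vt (n j : ℕ) : Pt :=
  (Real.cos (2 * Real.pi * (j : ℝ) / M n), Real.sin (2 * Real.pi * (j : ℝ) / M n))

/-- the center -/
def ctr : Pt := ((0:ℝ), (0:ℝ))

/-- the `j`-th point of the wheel, `0 ≤ j < 2n`, center last -/
def wp (n j : ℕ) : Pt := if j = 2*n - 1 then ctr else vt n j

variable {n : ℕ}

lemma M_pos (hn : 2 ≤ n) : 0 < M n := by
  unfold M; have : 0 < 2*n-1 := by omega
  exact_mod_cast this

lemma sin_frac_pos (hn : 2 ≤ n) {t : ℕ} (h1 : 0 < t) (h2 : t < 2*n-1) :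
    0 < sin (π * (t:ℝ) / M n) := by
  apply sin_pos_of_pos_of_lt_pi
  · apply div_pos (mul_pos pi_pos (by exact_mod_cast h1)) (M_pos hn)
  · rw [div_lt_iff₀ (M_pos hn)]
    have ht : (t : ℝ) < M n := by unfold M; exact_mod_cast h2
    nlinarith [pi_pos]

lemma det3_vt (a b x : ℕ) :
    det3 (vt n a) (vt n b) (vt n x) =
      4 * sin (π*((b:ℝ)-a)/M n) * sin (π*((x:ℝ)-b)/M n) * sin (π*((x:ℝ)-a)/M n) := by
  unfold vt
  rw [det3_circle]
  rw [show (2*π*(b:ℝ)/M n - 2*π*(a:ℝ)/M n)/2 = π*((b:ℝ)-a)/M n by ring,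
      show (2*π*(x:ℝ)/M n - 2*π*(b:ℝ)/M n)/2 = π*((x:ℝ)-b)/M n by ring,
      show (2*π*(x:ℝ)/M n - 2*π*(a:ℝ)/M n)/2 = π*((x:ℝ)-a)/M n by ring]

lemma det3_vt_ctr (a b : ℕ) :
    det3 (vt n a) (vt n b) ctr = sin (2*π*((b:ℝ)-a)/M n) := by
  unfold vt ctr
  rw [det3_circle_center]
  congr 1; ring

lemma sin_nat_pos (hn : 2 ≤ n) {a b : ℕ} (h1 : a < b) (h2 : b - a < 2*n-1) :
    0 < sin (π*((b:ℝ)-a)/M n) := by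
  rw [show ((b:ℝ) - a) = ((b - a : ℕ) : ℝ) by rw [Nat.cast_sub h1.le]]
  exact sin_frac_pos hn (by omega) h2

lemma det3_pos1 (hn : 2 ≤ n) {a b x : ℕ} (hab : a < b) (hbx : b < x) (hx : x < 2*n-1) :
    0 < det3 (vt n a) (vt n b) (vt n x) := by
  rw [det3_vt]
  have s1 := sin_nat_pos hn hab (by omega)
  have s2 := sin_nat_pos hn hbx (by omega)
  have s3 := sin_nat_pos hn (hab.trans hbx) (by omega)
  nlinarith [mul_pos (mul_pos s1 s2) s3]

lemma det3_pos2 (hn : 2 ≤ n) {x a b : ℕ} (hxa : x < a) (hab : a < b) (hb : b < 2*n-1) :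
    0 < det3 (vt n a) (vt n b) (vt n x) := by
  rw [det3_vt]
  rw [show π*((x:ℝ)-b)/M n = -(π*((b:ℝ)-x)/M n) by ring, Real.sin_neg,
      show π*((x:ℝ)-a)/M n = -(π*((a:ℝ)-x)/M n) by ring, Real.sin_neg]
  have s1 := sin_nat_pos hn hab (by omega)
  have s2 := sin_nat_pos hn (hxa.trans hab) (by omega)
  have s3 := sin_nat_pos hn hxa (by omega)
  nlinarith [mul_pos (mul_pos s1 s2) s3]

lemma det3_ctr_pos (hn : 2 ≤ n) {a b : ℕ} (hab : a < b) (hb : b < a + n) :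
    0 < det3 (vt n a) (vt n b) ctr := by
  rw [det3_vt_ctr]
  rw [show 2*π*((b:ℝ)-a)/M n = π*((2*(b-a) : ℕ):ℝ)/M n by
    rw [Nat.cast_mul, Nat.cast_sub hab.le]; push_cast; ring]
  exact sin_frac_pos hn (by omega) (by omega)

lemma det3_ctr_neg (hn : 2 ≤ n) {a b : ℕ} (hab : a < b) (hb : a + n ≤ b) (hb2 : b < 2*n-1) :
    det3 (vt n a) (vt n b) ctr < 0 := by
  rw [det3_vt_ctr]
  have hM : M n ≠ 0 := (M_pos hn).ne'
  have harg : 2*π*((b:ℝ)-a)/M n = π*((2*(b-a) - (2*n-1) : ℕ):ℝ)/M n + π := by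
    have h1 : ((2*(b-a) - (2*n-1) : ℕ):ℝ) = 2*((b:ℝ)-a) - M n := by
      unfold M
      have h2 : (2*n-1 : ℕ) ≤ 2*(b-a) := by omega
      rw [Nat.cast_sub h2, Nat.cast_mul, Nat.cast_sub hab.le]
      push_cast; ring
    rw [h1]
    field_simp
    ring
  rw [harg]
  have hs : sin (π*((2*(b-a) - (2*n-1) : ℕ):ℝ)/M n + π)
      = - sin (π*((2*(b-a) - (2*n-1) : ℕ):ℝ)/M n) := by simp [Real.sin_add]
  rw [hs]
  have := sin_frac_pos hn (t := 2*(b-a) - (2*n-1)) (by omega) (by omega)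
  linarith

lemma det3_ctr_ne (hn : 2 ≤ n) {a b : ℕ} (hab : a ≠ b) (ha : a < 2*n-1) (hb : b < 2*n-1) :
    det3 (vt n a) (vt n b) ctr ≠ 0 := by
  rcases lt_or_gt_of_ne hab with h | h
  · rcases lt_or_ge b (a + n) with h2 | h2
    · exact (det3_ctr_pos hn h h2).ne'
    · exact (det3_ctr_neg hn h h2 hb).ne
  · rw [det3_swap12]
    rcases lt_or_ge a (b + n) with h2 | h2
    · exact neg_ne_zero.mpr (det3_ctr_pos hn h h2).ne'
    · exact neg_ne_zero.mpr (det3_ctr_neg hn h h2 ha).ne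

lemma sin_nat_ne (hn : 2 ≤ n) {a b : ℕ} (h : a ≠ b) (ha : a < 2*n-1) (hb : b < 2*n-1) :
    sin (π*((b:ℝ)-a)/M n) ≠ 0 := by
  rcases lt_or_gt_of_ne h with h1 | h1
  · exact (sin_nat_pos hn h1 (by omega)).ne'
  · rw [show π*((b:ℝ)-a)/M n = -(π*((a:ℝ)-b)/M n) by ring, Real.sin_neg]
    exact neg_ne_zero.mpr (sin_nat_pos hn h1 (by omega)).ne'

lemma det3_vt_ne (hn : 2 ≤ n) {a b x : ℕ} (hab : a ≠ b) (hax : a ≠ x) (hbx : b ≠ x)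
    (ha : a < 2*n-1) (hb : b < 2*n-1) (hx : x < 2*n-1) :
    det3 (vt n a) (vt n b) (vt n x) ≠ 0 := by
  rw [det3_vt]
  have s1 := sin_nat_ne hn hab ha hb
  have s2 := sin_nat_ne hn hbx hb hx
  have s3 := sin_nat_ne hn hax ha hx
  positivity

lemma det3_wp_ne (hn : 2 ≤ n) {p q r : ℕ} (hp : p < 2*n) (hq : q < 2*n) (hr : r < 2*n)
    (hpq : p ≠ q) (hpr : p ≠ r) (hqr : q ≠ r) :
    det3 (wp n p) (wp n q) (wp n r) ≠ 0 := by
  unfold wp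
  by_cases h1 : p = 2*n-1
  · rw [if_pos h1, if_neg (by omega), if_neg (by omega)]
    rw [det3_cyclic]
    exact det3_ctr_ne hn hqr (by omega) (by omega)
  · rw [if_neg h1]
    by_cases h2 : q = 2*n-1
    · rw [if_pos h2, if_neg (by omega)]
      rw [det3_cyclic, det3_cyclic]
      exact det3_ctr_ne hn (Ne.symm hpr) (by omega) (by omega)
    · rw [if_neg h2]
      by_cases h3 : r = 2*n-1
      · rw [if_pos h3]
        exact det3_ctr_ne hn hpq (by omega) (by omega)
      · rw [if_neg h3]
        exact det3_vt_ne hn hpq hpr hqr (by omega) (by omega) (by omega)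

/-! ### wheel membership and indexing -/

lemma vt_ne_ctr (hn : 2 ≤ n) (j : ℕ) : vt n j ≠ ctr := by
  intro h
  have h1 : Real.cos (2 * Real.pi * (j : ℝ) / M n) = 0 := congrArg Prod.fst h
  have h2 : Real.sin (2 * Real.pi * (j : ℝ) / M n) = 0 := congrArg Prod.snd h
  have := sin_sq_add_cos_sq (2 * Real.pi * (j : ℝ) / M n)
  rw [h1, h2] at this
  norm_num at this

lemma wp_inj (hn : 2 ≤ n) {j k : ℕ} (hj : j < 2*n) (hk : k < 2*n)
    (h : wp n j = wp n k) : j = k := by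
  unfold wp at h
  by_cases h1 : j = 2*n-1 <;> by_cases h2 : k = 2*n-1
  · omega
  · rw [if_pos h1, if_neg h2] at h; exact absurd h.symm (vt_ne_ctr hn k)
  · rw [if_neg h1, if_pos h2] at h; exact absurd h (vt_ne_ctr hn j)
  · rw [if_neg h1, if_neg h2] at h
    by_contra hne
    have := det3_ctr_ne hn hne (by omega) (by omega)
    rw [h, det3_self] at this
    exact this rfl

lemma wp_mem (n : ℕ) {j : ℕ} (hj : j < 2*n) : wp n j ∈ wheel n := by
  unfold wp wheel
  by_cases h1 : j = 2*n-1
  · rw [if_pos h1]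
    exact Finset.mem_insert_self _ _
  · rw [if_neg h1]
    apply Finset.mem_insert_of_mem
    apply Finset.mem_image.2
    exact ⟨j, Finset.mem_range.2 (by omega), rfl⟩

lemma exists_rep (n : ℕ) (a : {x // x ∈ wheel n}) :
    ∃ j, j ≤ 2*n - 1 ∧ wp n j = (a : Pt) := by
  have := a.2
  unfold wheel at this
  rcases Finset.mem_insert.1 this with h | h
  · refine ⟨2*n-1, le_refl _, ?_⟩
    rw [wp, if_pos rfl, h]
    rfl
  · obtain ⟨j, hj, he⟩ := Finset.mem_image.1 h
    rw [Finset.mem_range] at hj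
    refine ⟨j, by omega, ?_⟩
    rw [wp, if_neg (by omega)]
    unfold vt M
    exact he

/-- index of a wheel point -/
def idx (n : ℕ) (a : {x // x ∈ wheel n}) : ℕ := (exists_rep n a).choose

lemma idx_le (a : {x // x ∈ wheel n}) : idx n a ≤ 2*n - 1 := (exists_rep n a).choose_spec.1

lemma idx_lt (hn : 2 ≤ n) (a : {x // x ∈ wheel n}) : idx n a < 2*n := by
  have := idx_le a; omega

lemma wp_idx (a : {x // x ∈ wheel n}) : wp n (idx n a) = (a : Pt) :=
  (exists_rep n a).choose_spec.2

lemma idx_inj (hn : 2 ≤ n) {a b : {x // x ∈ wheel n}} (h : idx n a = idx n b) : a = b := by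
  apply Subtype.ext
  rw [← wp_idx a, ← wp_idx b, h]

lemma idx_ne (hn : 2 ≤ n) {a b : {x // x ∈ wheel n}} (h : a ≠ b) : idx n a ≠ idx n b :=
  fun he => h (idx_inj hn he)

/-- the wheel point with index `j` as an element of the subtype -/
def vert (n : ℕ) (j : ℕ) (hj : j < 2*n) : {x // x ∈ wheel n} := ⟨wp n j, wp_mem n hj⟩

lemma idx_vert (hn : 2 ≤ n) (j : ℕ) (hj : j < 2*n) : idx n (vert n j hj) = j :=
  wp_inj hn (idx_lt hn _) hj (wp_idx (vert n j hj))

/-! ### the double-star relation -/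

/-- edge relation of the `i`-th tree: hub at `i` or `i+n`, cyclic distance in `[1,n]` -/
def Rel (n i x y : ℕ) : Prop :=
  (x = i ∨ x = i + n) ∧ ((x < y ∧ y ≤ x + n) ∨ (y + n ≤ x))

/-- the `i`-th tree -/
def TT (n i : ℕ) : SimpleGraph {x // x ∈ wheel n} :=
  SimpleGraph.fromRel fun a b => Rel n i (idx n a) (idx n b)

lemma TT_adj {i : ℕ} {a b : {x // x ∈ wheel n}} :
    (TT n i).Adj a b ↔ a ≠ b ∧ (Rel n i (idx n a) (idx n b) ∨ Rel n i (idx n b) (idx n a)) :=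
  SimpleGraph.fromRel_adj _ a b

/-! ### planarity -/

lemma key_main (hn : 2 ≤ n) {i y1 y2 : ℕ} (hi : i < n) (hy1 : y1 < 2*n) (hy2 : y2 < 2*n)
    (hr1 : Rel n i i y1) (hr2 : Rel n i (i+n) y2)
    (hne2 : ¬(i = y2 ∧ y1 = i + n)) :
    openSegment ℝ (wp n i) (wp n y1) ∩ openSegment ℝ (wp n (i+n)) (wp n y2) = ∅ := by
  have hd1 : i < y1 ∧ y1 ≤ i + n := by
    rcases hr1.2 with h | h
    · exact h
    · omega
  have hd2 : (i + n < y2 ∧ y2 ≤ i + 2*n) ∨ y2 ≤ i := by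
    rcases hr2.2 with h | h
    · exact Or.inl ⟨h.1, by omega⟩
    · exact Or.inr (by omega)
  by_cases hb1 : y1 = i + n
  · -- first edge is the base edge; shares endpoint wp (i+n)
    have hy2i : y2 ≠ i := fun h => hne2 ⟨h.symm, hb1⟩
    subst hb1
    rw [openSegment_symm ℝ (wp n i) (wp n (i+n))]
    apply seg_disjoint_of_shared
    exact det3_wp_ne hn (by omega) (by omega) hy2 (by omega) (by omega) (by omega)
  · by_cases hb2 : y2 = i
    · -- second edge is the base edge; shares endpoint wp i
      rw [hb2, openSegment_symm ℝ (wp n (i+n)) (wp n i)]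
      apply seg_disjoint_of_shared
      exact det3_wp_ne hn (by omega) hy1 (by omega) (by omega) (by omega) (by omega)
    · -- disjoint endpoints: same-side argument w.r.t. the chord (i, y1)
      have hy1m : y1 < 2*n - 1 := by omega
      have him : i < 2*n - 1 := by omega
      have e1 : wp n i = vt n i := by rw [wp, if_neg (by omega)]
      have e2 : wp n y1 = vt n y1 := by rw [wp, if_neg (by omega)]
      rw [e1, e2]
      apply seg_disjoint_of_side
      · -- wp (i+n) strictly left
        by_cases hc : i + n = 2*n-1
        · rw [wp, if_pos hc]
          exact det3_ctr_pos hn hd1.1 (by omega)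
        · rw [wp, if_neg hc]
          exact det3_pos1 hn hd1.1 (by omega) (by omega)
      · -- wp y2 strictly left
        by_cases hc : y2 = 2*n-1
        · rw [wp, if_pos hc]
          exact det3_ctr_pos hn hd1.1 (by omega)
        · rw [wp, if_neg hc]
          rcases hd2 with h | h
          · exact det3_pos1 hn hd1.1 (by omega) (by omega)
          · exact det3_pos2 hn (by omega) hd1.1 (by omega)

lemma key (hn : 2 ≤ n) {i x1 y1 x2 y2 : ℕ} (hi : i < n)
    (hx1 : x1 < 2*n) (hy1 : y1 < 2*n) (hx2 : x2 < 2*n) (hy2 : y2 < 2*n)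
    (hr1 : Rel n i x1 y1) (hr2 : Rel n i x2 y2)
    (hne1 : ¬(x1 = x2 ∧ y1 = y2)) (hne2 : ¬(x1 = y2 ∧ y1 = x2)) :
    openSegment ℝ (wp n x1) (wp n y1) ∩ openSegment ℝ (wp n x2) (wp n y2) = ∅ := by
  have hxy1 : x1 ≠ y1 := by rcases hr1.2 with h | h <;> omega
  have hxy2 : x2 ≠ y2 := by rcases hr2.2 with h | h <;> omega
  by_cases hxx : x1 = x2
  · -- shared hub
    subst hxx
    have hyy : y1 ≠ y2 := fun h => hne1 ⟨rfl, h⟩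
    apply seg_disjoint_of_shared
    exact det3_wp_ne hn hx1 hy1 hy2 hxy1 (by omega) hyy
  · rcases hr1.1 with h1 | h1 <;> rcases hr2.1 with h2 | h2
    · omega
    · subst h1; subst h2
      exact key_main hn hi hy1 hy2 hr1 hr2 hne2
    · subst h1; subst h2
      rw [Set.inter_comm]
      exact key_main hn hi hy2 hy1 hr2 hr1 (fun h => hne2 ⟨h.2.symm, h.1.symm⟩)
    · omega

lemma TT_plane (hn : 2 ≤ n) {i : ℕ} (hi : i < n) : IsPlaneGraph (TT n i) := by
  intro a b c d hab hcd hne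
  rw [TT_adj] at hab hcd
  obtain ⟨hab1, hab2⟩ := hab
  obtain ⟨hcd1, hcd2⟩ := hcd
  have H1 : ¬(idx n a = idx n c ∧ idx n b = idx n d) := by
    rintro ⟨e1, e2⟩
    exact hne (by rw [idx_inj hn e1, idx_inj hn e2])
  have H2 : ¬(idx n a = idx n d ∧ idx n b = idx n c) := by
    rintro ⟨e1, e2⟩
    apply hne
    rw [idx_inj hn e1, idx_inj hn e2, Sym2.eq_swap]
  have ca : (a : Pt) = wp n (idx n a) := (wp_idx a).symm
  have cb : (b : Pt) = wp n (idx n b) := (wp_idx b).symm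
  have cc : (c : Pt) = wp n (idx n c) := (wp_idx c).symm
  have cd' : (d : Pt) = wp n (idx n d) := (wp_idx d).symm
  rw [ca, cb, cc, cd']
  rcases hab2 with h1 | h1 <;> rcases hcd2 with h2 | h2
  · exact key hn hi (idx_lt hn a) (idx_lt hn b) (idx_lt hn c) (idx_lt hn d) h1 h2 H1 H2
  · rw [openSegment_symm ℝ (wp n (idx n c)) (wp n (idx n d))]
    exact key hn hi (idx_lt hn a) (idx_lt hn b) (idx_lt hn d) (idx_lt hn c) h1 h2
      (fun h => H2 ⟨h.1, h.2⟩) (fun h => H1 ⟨h.1, h.2⟩)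
  · rw [openSegment_symm ℝ (wp n (idx n a)) (wp n (idx n b))]
    exact key hn hi (idx_lt hn b) (idx_lt hn a) (idx_lt hn c) (idx_lt hn d) h1 h2
      (fun h => H2 ⟨h.2, h.1⟩) (fun h => H1 ⟨h.2, h.1⟩)
  · rw [openSegment_symm ℝ (wp n (idx n a)) (wp n (idx n b)),
        openSegment_symm ℝ (wp n (idx n c)) (wp n (idx n d))]
    exact key hn hi (idx_lt hn b) (idx_lt hn a) (idx_lt hn d) (idx_lt hn c) h1 h2
      (fun h => H1 ⟨h.2, h.1⟩) (fun h => H2 ⟨h.2, h.1⟩)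

/-! ### tree structure -/

lemma TT_connected (hn : 2 ≤ n) {i : ℕ} (hi : i < n) : (TT n i).Connected := by
  have hilt : i < 2*n := by omega
  have hinlt : i + n < 2*n := by omega
  rw [SimpleGraph.connected_iff_exists_forall_reachable]
  refine ⟨vert n i hilt, fun a => ?_⟩
  have hx := idx_lt hn a
  set x := idx n a with hxdef
  have hadjbase : (TT n i).Adj (vert n i hilt) (vert n (i+n) hinlt) := by
    rw [TT_adj, idx_vert hn _ hilt, idx_vert hn _ hinlt]
    refine ⟨?_, Or.inl ⟨Or.inl rfl, Or.inl ⟨by omega, by omega⟩⟩⟩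
    intro h
    have := congrArg (idx n) h
    rw [idx_vert hn _ hilt, idx_vert hn _ hinlt] at this
    omega
  by_cases hxi : x = i
  · have he : a = vert n i hilt := idx_inj hn (by rw [idx_vert hn _ hilt, ← hxdef, hxi])
    rw [he]
  · by_cases hcase : i < x ∧ x ≤ i + n
    · have hadj : (TT n i).Adj (vert n i hilt) a := by
        rw [TT_adj, idx_vert hn _ hilt]
        refine ⟨?_, Or.inl ⟨Or.inl rfl, Or.inl hcase⟩⟩
        intro h
        have := congrArg (idx n) h
        rw [idx_vert hn _ hilt] at this
        omega
      exact hadj.reachable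
    · have hadj : (TT n i).Adj (vert n (i+n) hinlt) a := by
        rw [TT_adj, idx_vert hn _ hinlt]
        refine ⟨?_, Or.inl ⟨Or.inr rfl, ?_⟩⟩
        · intro h
          have := congrArg (idx n) h
          rw [idx_vert hn _ hinlt] at this
          omega
        · rcases Nat.lt_or_ge x i with h | h
          · exact Or.inr (by omega)
          · exact Or.inl ⟨by omega, by omega⟩
      exact hadjbase.reachable.trans hadj.reachable

lemma cycle_neighbors {V : Type*} {G : SimpleGraph V} {u : V} {c : G.Walk u u}
    (hc : c.IsCycle) : ∃ x y, x ≠ y ∧ G.Adj u x ∧ G.Adj u y := by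
  cases c with
  | nil => exact absurd hc (SimpleGraph.Walk.IsCycle.not_of_nil)
  | @cons _ v _ h p =>
    rw [SimpleGraph.Walk.cons_isCycle_iff] at hc
    obtain ⟨hp, he⟩ := hc
    have hvu : u ≠ v := h.ne
    have hnn : ¬ p.reverse.Nil := SimpleGraph.Walk.not_nil_of_ne hvu
    obtain ⟨w, hadj, q, hq⟩ := SimpleGraph.Walk.not_nil_iff.mp hnn
    have hmem : s(u, w) ∈ p.edges := by
      have h2 : s(u,w) ∈ p.reverse.edges := by
        rw [hq]; exact List.mem_cons_self
      rwa [SimpleGraph.Walk.edges_reverse, List.mem_reverse] at h2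
    refine ⟨v, w, fun hvw => ?_, h, hadj⟩
    subst hvw
    exact he hmem

lemma TT_acyclic (hn : 2 ≤ n) {i : ℕ} (hi : i < n) : (TT n i).IsAcyclic := by
  classical
  intro v c hc
  -- every vertex other than the two hubs has at most one neighbor
  have main : ∀ u : {x // x ∈ wheel n}, u ∈ c.support →
      idx n u ≠ i → idx n u ≠ i + n → False := by
    intro u hu h1 h2
    obtain ⟨x, y, hxy, hux, huy⟩ := cycle_neighbors (hc.rotate hu)
    rw [TT_adj] at hux huy
    have hrx : Rel n i (idx n x) (idx n u) := by
      rcases hux.2 with h | h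
      · rcases h.1 with h' | h' <;> omega
      · exact h
    have hry : Rel n i (idx n y) (idx n u) := by
      rcases huy.2 with h | h
      · rcases h.1 with h' | h' <;> omega
      · exact h
    have hne := idx_ne hn hxy
    have hbx := idx_lt hn x
    have hby := idx_lt hn y
    have hbu := idx_lt hn u
    obtain ⟨hhx, hdx⟩ := hrx
    obtain ⟨hhy, hdy⟩ := hry
    rcases hdx with h | h <;> rcases hdy with h' | h' <;> omega
  -- find a vertex of the cycle that is not a hub
  have h3 : 3 ≤ c.length := hc.three_le_length
  have hnd : c.support.tail.Nodup := ((SimpleGraph.Walk.isCycle_def c).1 hc).2.2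
  have hlen : c.support.tail.length = c.length := by
    have := c.length_support
    simp [List.length_tail, this]
  rcases htl : c.support.tail with _ | ⟨a, _ | ⟨b, _ | ⟨d, rest⟩⟩⟩
  · rw [htl] at hlen; simp at hlen; omega
  · rw [htl] at hlen; simp at hlen; omega
  · rw [htl] at hlen; simp at hlen; omega
  · rw [htl] at hnd
    simp only [List.nodup_cons, List.mem_cons] at hnd
    have hab : a ≠ b := fun h => hnd.1 (Or.inl h)
    have had : a ≠ d := fun h => hnd.1 (Or.inr (Or.inl h))
    have hbd : b ≠ d := fun h => hnd.2.1 (Or.inl h)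
    have hma : a ∈ c.support := List.mem_of_mem_tail (htl ▸ List.mem_cons_self)
    have hmb : b ∈ c.support :=
      List.mem_of_mem_tail (htl ▸ List.mem_cons_of_mem _ (List.mem_cons_self))
    have hmd : d ∈ c.support :=
      List.mem_of_mem_tail (htl ▸ List.mem_cons_of_mem _ (List.mem_cons_of_mem _
        (List.mem_cons_self)))
    have hia := idx_ne hn hab
    have hib := idx_ne hn had
    have hid := idx_ne hn hbd
    by_cases ha1 : idx n a = i
    · by_cases hb1 : idx n b = i + n
      · exact main d hmd (by omega) (by omega)
      · exact main b hmb (by omega) hb1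
    · by_cases ha2 : idx n a = i + n
      · by_cases hb1 : idx n b = i
        · exact main d hmd (by omega) (by omega)
        · exact main b hmb hb1 (by omega)
      · exact main a hma ha1 ha2

lemma TT_tree (hn : 2 ≤ n) {i : ℕ} (hi : i < n) : (TT n i).IsTree :=
  (SimpleGraph.isTree_iff _).mpr ⟨TT_connected hn hi, TT_acyclic hn hi⟩

end WheelAux
end

/-- For every `n ≥ 2`, the edge set of the complete geometric graph on
the regular wheel configuration `W_{2n}` can be partitioned into `n` plane spanning
trees. -/
theorem wheel_partition_into_trees (n : ℕ) (hn : 2 ≤ n) :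
    ∃ T : Fin n → SimpleGraph {x // x ∈ wheel n},
      (∀ i, IsPlaneSpanningTree (T i)) ∧
      (∀ i j, i ≠ j → Disjoint (T i).edgeSet (T j).edgeSet) ∧
      (∀ a b : {x // x ∈ wheel n}, a ≠ b → ∃ i, (T i).Adj a b) := by
  classical
  refine ⟨fun i => WheelAux.TT n i.val, ?_, ?_, ?_⟩
  · intro i
    exact ⟨WheelAux.TT_tree hn i.isLt, WheelAux.TT_plane hn i.isLt⟩
  · intro i j hij
    rw [Set.disjoint_left]
    intro e he1 he2
    induction e using Sym2.ind with
    | _ a b =>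
      rw [SimpleGraph.mem_edgeSet] at he1 he2
      rw [WheelAux.TT_adj] at he1 he2
      have hba := WheelAux.idx_lt hn a
      have hbb := WheelAux.idx_lt hn b
      have hi := i.isLt
      have hj := j.isLt
      apply hij
      apply Fin.ext
      rcases he1.2 with ⟨c1, d1⟩ | ⟨c1, d1⟩ <;> rcases he2.2 with ⟨c2, d2⟩ | ⟨c2, d2⟩ <;>
        rcases c1 with c1 | c1 <;> rcases c2 with c2 | c2 <;>
        rcases d1 with d1 | d1 <;> rcases d2 with d2 | d2 <;> omega
  · intro a b hab
    have hba := WheelAux.idx_lt hn a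
    have hbb := WheelAux.idx_lt hn b
    set x := WheelAux.idx n a with hx
    set y := WheelAux.idx n b with hy
    have hxy : x ≠ y := WheelAux.idx_ne hn hab
    by_cases hc : (x < y ∧ y ≤ x + n) ∨ (y + n ≤ x)
    · -- hub is x
      rcases Nat.lt_or_ge x n with h | h
      · refine ⟨⟨x, h⟩, ?_⟩
        rw [WheelAux.TT_adj]
        exact ⟨hab, Or.inl ⟨Or.inl rfl, hc⟩⟩
      · refine ⟨⟨x - n, by omega⟩, ?_⟩
        rw [WheelAux.TT_adj]
        exact ⟨hab, Or.inl ⟨Or.inr (show x = x - n + n by omega), hc⟩⟩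
    · -- hub is y
      have hc' : (y < x ∧ x ≤ y + n) ∨ (x + n ≤ y) := by omega
      rcases Nat.lt_or_ge y n with h | h
      · refine ⟨⟨y, h⟩, ?_⟩
        rw [WheelAux.TT_adj]
        exact ⟨hab, Or.inr ⟨Or.inl rfl, hc'⟩⟩
      · refine ⟨⟨y - n, by omega⟩, ?_⟩
        rw [WheelAux.TT_adj]
        exact ⟨hab, Or.inr ⟨Or.inr (show y = y - n + n by omega), hc'⟩⟩
end

section
/- Let n ≥ 3. If the edge set of the complete geometric graph on the regular wheel configuration W_{2n} is partitioned into n plane spanning trees, then none of these n trees is a Hamiltonian path (i.e., each tree has some vertex of degree at least 3). -/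
-- ## Auxiliary geometry
open Real

def orz (p q x : Pt) : ℝ :=
  (q.1 - p.1) * (x.2 - p.2) - (q.2 - p.2) * (x.1 - p.1)

lemma orz_swap (p q x : Pt) : orz p q x = - orz p x q := by
  simp only [orz]; ring

lemma orz_cyc (p q x : Pt) : orz p q x = orz q x p := by
  simp only [orz]; ring

lemma orz_affine (a b c d : Pt) (t : ℝ) :
    orz a b ((1-t) • c + t • d) = (1-t) * orz a b c + t * orz a b d := by
  simp only [orz, Prod.smul_fst, Prod.smul_snd, Prod.fst_add, Prod.snd_add, smul_eq_mul]
  ring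

lemma mem_openSegment_pt {a b z : Pt} (t : ℝ) (h0 : 0 < t) (h1 : t < 1)
    (hz : z = (1-t) • a + t • b) : z ∈ openSegment ℝ a b :=
  ⟨1-t, t, by linarith, h0, by ring, hz.symm⟩

lemma param_bounds {X Y : ℝ} (h : X * Y < 0) : 0 < X/(X-Y) ∧ X/(X-Y) < 1 := by
  rcases mul_neg_iff.mp h with ⟨hX, hY⟩ | ⟨hX, hY⟩
  · constructor
    · exact div_pos hX (by linarith)
    · rw [div_lt_one (by linarith)]; linarith
  · have hrw : X/(X-Y) = (-X)/(Y-X) := by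
      rw [div_eq_div_iff (by linarith) (by linarith)]; ring
    rw [hrw]
    constructor
    · exact div_pos (by linarith) (by linarith)
    · rw [div_lt_one (by linarith)]; linarith

/-- kernel: opposite orientations imply open segments intersect -/
lemma seg_cross {a b c d : Pt}
    (h1 : orz a b c * orz a b d < 0) (h2 : orz c d a * orz c d b < 0) :
    (openSegment ℝ a b ∩ openSegment ℝ c d).Nonempty := by
  have hden : orz a b c - orz a b d ≠ 0 := by
    intro h
    have : orz a b c = orz a b d := by linarith
    rw [this] at h1; nlinarith
  obtain ⟨ht0, ht1⟩ := param_bounds h1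
  set t : ℝ := orz a b c / (orz a b c - orz a b d) with ht
  have hkey : t * (orz a b c - orz a b d) = orz a b c := div_mul_cancel₀ _ hden
  set z : Pt := (1-t) • c + t • d with hz
  have hfz : orz a b z = 0 := by
    rw [hz, orz_affine]; linear_combination (-1 : ℝ) * hkey
  refine ⟨z, ?_, mem_openSegment_pt t ht0 ht1 hz⟩
  have hcol : (b.1 - a.1) * (z.2 - a.2) = (b.2 - a.2) * (z.1 - a.1) := by
    simp only [orz] at hfz; linarith
  obtain ⟨s', hs1', hs2'⟩ : ∃ s' : ℝ, z.1 - a.1 = s' * (b.1 - a.1) ∧ z.2 - a.2 = s' * (b.2 - a.2) := by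
    rcases ne_or_eq (b.1 - a.1) 0 with h | h
    · refine ⟨(z.1 - a.1)/(b.1 - a.1), by field_simp, ?_⟩
      field_simp
      nlinarith [hcol]
    · rcases ne_or_eq (b.2 - a.2) 0 with h' | h'
      · refine ⟨(z.2 - a.2)/(b.2 - a.2), ?_, by field_simp⟩
        have hz1 : z.1 - a.1 = 0 := by
          rcases mul_eq_zero.mp (by rw [h] at hcol; linarith [hcol] : (b.2 - a.2) * (z.1 - a.1) = 0) with h'' | h''
          · exact absurd h'' h'
          · exact h''
        rw [hz1, h]; ring
      · exfalso
        have hab : a = b := by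
          apply Prod.ext <;> linarith [h, h']
        rw [hab] at h2; nlinarith
  have hzs : z = (1-s') • a + s' • b := by
    apply Prod.ext <;>
      simp only [Prod.fst_add, Prod.snd_add, Prod.smul_fst, Prod.smul_snd, smul_eq_mul] <;>
      nlinarith [hs1', hs2']
  have hgz : orz c d z = 0 := by
    rw [hz, orz_affine]; simp only [orz]; ring
  have hgs : (1-s') * orz c d a + s' * orz c d b = 0 := by
    rw [← orz_affine, ← hzs, hgz]
  obtain ⟨hs0, hs1⟩ := param_bounds h2
  set s : ℝ := orz c d a / (orz c d a - orz c d b) with hsdef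
  have hgden : orz c d a - orz c d b ≠ 0 := by
    intro h
    have : orz c d a = orz c d b := by linarith
    rw [this] at h2; nlinarith
  have hskey : s * (orz c d a - orz c d b) = orz c d a := div_mul_cancel₀ _ hgden
  have hss : s' = s := by
    have h1' : (s - s') * (orz c d a - orz c d b) = 0 := by
      linear_combination hskey + hgs
    rcases mul_eq_zero.mp h1' with h | h
    · linarith
    · exact absurd h hgden
  rw [hss] at hzs
  exact mem_openSegment_pt s hs0 hs1 hzs
noncomputable def wpt (M : ℕ) (j : ℕ) : Pt :=
  (Real.cos (2 * Real.pi * (j : ℝ) / (M : ℝ)), Real.sin (2 * Real.pi * (j : ℝ) / (M : ℝ)))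

def OO : Pt := ((0:ℝ), (0:ℝ))

lemma theta_add (M : ℕ) (hM : 0 < M) (j : ℕ) :
    2 * Real.pi * ((j + M : ℕ) : ℝ) / (M : ℝ) = 2 * Real.pi * (j : ℝ) / (M : ℝ) + 2 * Real.pi := by
  have hM' : (M : ℝ) ≠ 0 := Nat.cast_ne_zero.mpr hM.ne'
  push_cast
  field_simp

lemma wpt_period (M : ℕ) (hM : 0 < M) (j : ℕ) : wpt M (j + M) = wpt M j := by
  simp only [wpt, theta_add M hM j, Real.cos_add_two_pi, Real.sin_add_two_pi]

lemma wpt_mod (M : ℕ) (hM : 0 < M) (j : ℕ) : wpt M j = wpt M (j % M) := by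
  conv_lhs => rw [← Nat.mod_add_div j M]
  induction (j / M) with
  | zero => simp
  | succ k ih =>
      rw [show j % M + M * (k+1) = (j % M + M * k) + M by ring, wpt_period M hM, ih]

lemma sin3_pos {X Y : ℝ} (hX : 0 < X) (hY : 0 < Y) (hXY : X + Y < 2 * Real.pi) :
    0 < Real.sin X + Real.sin Y - Real.sin (X + Y) := by
  have e1 := Real.sin_two_mul (X/2)
  rw [show 2 * (X/2) = X by ring] at e1
  have e2 := Real.sin_two_mul (Y/2)
  rw [show 2 * (Y/2) = Y by ring] at e2
  have e3 := Real.sin_two_mul ((X+Y)/2)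
  rw [show 2 * ((X+Y)/2) = X + Y by ring] at e3
  have e4 := Real.sin_add (X/2) (Y/2)
  rw [show X/2 + Y/2 = (X+Y)/2 by ring] at e4
  have e5 := Real.cos_add (X/2) (Y/2)
  rw [show X/2 + Y/2 = (X+Y)/2 by ring] at e5
  have p1 := Real.sin_sq_add_cos_sq (X/2)
  have p2 := Real.sin_sq_add_cos_sq (Y/2)
  have key : Real.sin X + Real.sin Y - Real.sin (X+Y)
      = 4 * Real.sin (X/2) * Real.sin (Y/2) * Real.sin ((X+Y)/2) := by
    rw [e1, e2, e3, e4, e5]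
    linear_combination (-(2:ℝ) * Real.sin (Y/2) * Real.cos (Y/2)) * p1
      + (-(2:ℝ) * Real.sin (X/2) * Real.cos (X/2)) * p2
  rw [key]
  have pi_pos := Real.pi_pos
  have s1 : 0 < Real.sin (X/2) := Real.sin_pos_of_pos_of_lt_pi (by linarith) (by linarith)
  have s2 : 0 < Real.sin (Y/2) := Real.sin_pos_of_pos_of_lt_pi (by linarith) (by linarith)
  have s3 : 0 < Real.sin ((X+Y)/2) := Real.sin_pos_of_pos_of_lt_pi (by positivity) (by linarith)
  positivity

lemma orz_w_eq (M : ℕ) (a b c : ℕ) :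
    orz (wpt M a) (wpt M b) (wpt M c) =
      Real.sin (2 * Real.pi * (b : ℝ) / M - 2 * Real.pi * (a : ℝ) / M)
      + Real.sin (2 * Real.pi * (c : ℝ) / M - 2 * Real.pi * (b : ℝ) / M)
      + Real.sin (2 * Real.pi * (a : ℝ) / M - 2 * Real.pi * (c : ℝ) / M) := by
  simp only [orz, wpt, Real.sin_sub]
  ring

lemma orz_w_pos (M : ℕ) (hM : 0 < M) {a b c : ℕ} (hab : a < b) (hbc : b < c) (hca : c < a + M) :
    0 < orz (wpt M a) (wpt M b) (wpt M c) := by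
  have hM' : (0:ℝ) < (M : ℝ) := Nat.cast_pos.mpr hM
  have pi_pos := Real.pi_pos
  rw [orz_w_eq]
  set X := 2 * Real.pi * (b : ℝ) / M - 2 * Real.pi * (a : ℝ) / M with hX
  set Y := 2 * Real.pi * (c : ℝ) / M - 2 * Real.pi * (b : ℝ) / M with hY
  have ha : (a:ℝ) < (b:ℝ) := Nat.cast_lt.mpr hab
  have hb : (b:ℝ) < (c:ℝ) := Nat.cast_lt.mpr hbc
  have hc : (c:ℝ) < (a:ℝ) + M := by
    have := Nat.cast_lt (α := ℝ) |>.mpr hca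
    push_cast at this; linarith
  have hXv : 0 < X := by
    have hXe : X = 2 * Real.pi * ((b:ℝ) - (a:ℝ)) / M := by rw [hX]; ring
    rw [hXe]
    apply div_pos ?_ hM'
    nlinarith
  have hYv : 0 < Y := by
    have hYe : Y = 2 * Real.pi * ((c:ℝ) - (b:ℝ)) / M := by rw [hY]; ring
    rw [hYe]
    apply div_pos ?_ hM'
    nlinarith
  have hXY : X + Y < 2 * Real.pi := by
    rw [hX, hY]
    rw [show 2 * Real.pi * (b:ℝ) / M - 2 * Real.pi * (a:ℝ) / M + (2 * Real.pi * (c:ℝ) / M - 2 * Real.pi * (b:ℝ) / M) = (2 * Real.pi * (c:ℝ) - 2 * Real.pi * (a:ℝ)) / M by ring]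
    rw [div_lt_iff₀ hM']
    nlinarith
  have h3 := sin3_pos hXv hYv hXY
  have hsum : 2 * Real.pi * (a : ℝ) / M - 2 * Real.pi * (c : ℝ) / M = -(X + Y) := by
    rw [hX, hY]; ring
  rw [hsum, Real.sin_neg]
  linarith
lemma orz_O_w (M : ℕ) (hM : 0 < M) {a d : ℕ} :
    orz OO (wpt M a) (wpt M (a + d)) = Real.sin (2 * Real.pi * (d:ℝ) / M) := by
  have hM' : ((M:ℝ)) ≠ 0 := Nat.cast_ne_zero.mpr hM.ne'
  have : 2 * Real.pi * ((a + d : ℕ) : ℝ) / M = 2 * Real.pi * (a:ℝ)/M + 2 * Real.pi * (d:ℝ)/M := by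
    push_cast; field_simp
  simp only [orz, OO, wpt, this, Real.sin_add, Real.cos_add]
  linear_combination (Real.sin (2 * Real.pi * (d:ℝ) / M)) * (Real.sin_sq_add_cos_sq (2 * Real.pi * (a:ℝ) / M))

lemma sin_frac_pos (M : ℕ) (hM : 0 < M) {d : ℕ} (h0 : 0 < d) (h2 : 2 * d < M) :
    0 < Real.sin (2 * Real.pi * (d:ℝ) / M) := by
  have hM' : (0:ℝ) < (M:ℝ) := Nat.cast_pos.mpr hM
  have pi_pos := Real.pi_pos
  apply Real.sin_pos_of_pos_of_lt_pi
  · apply div_pos ?_ hM'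
    have : (0:ℝ) < (d:ℝ) := Nat.cast_pos.mpr h0
    nlinarith
  · rw [div_lt_iff₀ hM']
    have : (2 * (d:ℕ) : ℝ) < (M:ℝ) := by exact_mod_cast Nat.cast_lt.mpr h2
    push_cast at this
    nlinarith

lemma wpt_ne_OO (M : ℕ) (j : ℕ) : wpt M j ≠ OO := by
  intro h
  have h1 : Real.cos (2 * Real.pi * (j : ℝ) / M) = 0 := congrArg Prod.fst h
  have h2 : Real.sin (2 * Real.pi * (j : ℝ) / M) = 0 := congrArg Prod.snd h
  have := Real.sin_sq_add_cos_sq (2 * Real.pi * (j : ℝ) / M)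
  rw [h1, h2] at this
  norm_num at this

lemma wpt_inj (M : ℕ) (hM : 0 < M) {j k : ℕ} (hj : j < M) (hk : k < M)
    (h : wpt M j = wpt M k) : j = k := by
  have hM' : (0:ℝ) < (M:ℝ) := Nat.cast_pos.mpr hM
  have pi_pos := Real.pi_pos
  set θj := 2 * Real.pi * (j : ℝ) / M with hθj
  set θk := 2 * Real.pi * (k : ℝ) / M with hθk
  have h1 : Real.cos θj = Real.cos θk := congrArg Prod.fst h
  have h2 : Real.sin θj = Real.sin θk := congrArg Prod.snd h
  have hexp : Complex.exp (θj * Complex.I) = Complex.exp (θk * Complex.I) := by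
    rw [Complex.exp_mul_I, Complex.exp_mul_I]
    rw [← Complex.ofReal_cos, ← Complex.ofReal_cos, ← Complex.ofReal_sin, ← Complex.ofReal_sin]
    rw [h1, h2]
  obtain ⟨t, ht⟩ := Complex.exp_eq_exp_iff_exists_int.mp hexp
  have him : θj = θk + t * (2 * Real.pi) := by
    have := congrArg Complex.im ht
    simpa using this
  -- bounds
  have hjb : 0 ≤ θj ∧ θj < 2 * Real.pi := by
    constructor
    · apply div_nonneg ?_ hM'.le; positivity
    · rw [div_lt_iff₀ hM']
      have : (j:ℝ) < (M:ℝ) := Nat.cast_lt.mpr hj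
      nlinarith
  have hkb : 0 ≤ θk ∧ θk < 2 * Real.pi := by
    constructor
    · apply div_nonneg ?_ hM'.le; positivity
    · rw [div_lt_iff₀ hM']
      have : (k:ℝ) < (M:ℝ) := Nat.cast_lt.mpr hk
      nlinarith
  have ht0 : t = 0 := by
    by_contra hne
    rcases lt_or_gt_of_ne hne with hlt | hgt
    · have h' : t ≤ -1 := by omega
      have : (t:ℝ) ≤ -1 := by exact_mod_cast h'
      nlinarith [hjb.1, hjb.2, hkb.1, hkb.2]
    · have h' : (1:ℤ) ≤ t := hgt
      have : (1:ℝ) ≤ (t:ℝ) := by exact_mod_cast h'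
      nlinarith [hjb.1, hjb.2, hkb.1, hkb.2]
  rw [ht0] at him
  simp at him
  have him' : 2 * Real.pi * (j:ℝ) / M = 2 * Real.pi * (k:ℝ) / M := by
    rw [← hθj, ← hθk]; exact him
  have hMne : ((M:ℝ)) ≠ 0 := hM'.ne'
  have hjk : 2 * Real.pi * (j:ℝ) = 2 * Real.pi * (k:ℝ) := by
    calc 2 * Real.pi * (j:ℝ) = (2 * Real.pi * (j:ℝ) / M) * M := by field_simp
    _ = (2 * Real.pi * (k:ℝ) / M) * M := by rw [him']
    _ = 2 * Real.pi * (k:ℝ) := by field_simp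
  have h2π : (2 * Real.pi) ≠ 0 := by positivity
  have : (j:ℝ) = (k:ℝ) := mul_left_cancel₀ h2π hjk
  exact_mod_cast this

/-- chord-chord crossing: interleaved indices -/
lemma chord_cross (M : ℕ) (hM : 0 < M) {x1 x2 x3 x4 : ℕ}
    (h12 : x1 < x2) (h23 : x2 < x3) (h34 : x3 < x4) (hs : x4 < x1 + M) :
    (openSegment ℝ (wpt M x1) (wpt M x3) ∩ openSegment ℝ (wpt M x2) (wpt M x4)).Nonempty := by
  apply seg_cross
  · have p1 : 0 < orz (wpt M x1) (wpt M x2) (wpt M x3) :=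
      orz_w_pos M hM h12 h23 (by omega)
    have p2 : 0 < orz (wpt M x1) (wpt M x3) (wpt M x4) :=
      orz_w_pos M hM (h12.trans h23) h34 hs
    have e : orz (wpt M x1) (wpt M x3) (wpt M x2) = - orz (wpt M x1) (wpt M x2) (wpt M x3) := by
      rw [orz_swap]
    rw [e]
    nlinarith
  · have p1 : 0 < orz (wpt M x1) (wpt M x2) (wpt M x4) :=
      orz_w_pos M hM h12 (h23.trans h34) hs
    have p2 : 0 < orz (wpt M x2) (wpt M x3) (wpt M x4) :=
      orz_w_pos M hM h23 h34 (by omega)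
    have e1 : orz (wpt M x2) (wpt M x4) (wpt M x1) = orz (wpt M x1) (wpt M x2) (wpt M x4) := by
      rw [orz_cyc (wpt M x1)]
    have e2 : orz (wpt M x2) (wpt M x4) (wpt M x3) = - orz (wpt M x2) (wpt M x3) (wpt M x4) := by
      rw [orz_swap]
    rw [e1, e2]
    nlinarith

/-- spoke-chord crossing: spoke to a vertex strictly inside a short arc -/
lemma spoke_cross (M : ℕ) (hM : 0 < M) {p j q : ℕ}
    (hpj : p < j) (hjq : j < q) (hshort : 2 * (q - p) < M) :
    (openSegment ℝ OO (wpt M j) ∩ openSegment ℝ (wpt M p) (wpt M q)).Nonempty := by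
  apply seg_cross
  · -- orz OO (w j) (w p) * orz OO (w j) (w q) < 0
    have e1 : orz OO (wpt M j) (wpt M p) = - orz OO (wpt M p) (wpt M j) := by rw [orz_swap]
    have e2 : orz OO (wpt M p) (wpt M j) = Real.sin (2 * Real.pi * ((j - p : ℕ):ℝ) / M) := by
      have h := orz_O_w M hM (a := p) (d := j - p)
      rwa [show p + (j - p) = j by omega] at h
    have p1 : 0 < Real.sin (2 * Real.pi * ((j - p : ℕ):ℝ) / M) :=
      sin_frac_pos M hM (by omega) (by omega)
    have e3 : orz OO (wpt M j) (wpt M q) = Real.sin (2 * Real.pi * ((q - j : ℕ):ℝ) / M) := by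
      have h := orz_O_w M hM (a := j) (d := q - j)
      rwa [show j + (q - j) = q by omega] at h
    have p2 : 0 < Real.sin (2 * Real.pi * ((q - j : ℕ):ℝ) / M) :=
      sin_frac_pos M hM (by omega) (by omega)
    rw [e1, e2, e3]
    nlinarith
  · -- orz (w p) (w q) OO * orz (w p) (w q) (w j) < 0
    have e1 : orz (wpt M p) (wpt M q) OO = orz OO (wpt M p) (wpt M q) := by
      rw [orz_cyc, orz_cyc]
    have e2 : orz OO (wpt M p) (wpt M q) = Real.sin (2 * Real.pi * ((q - p : ℕ):ℝ) / M) := by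
      have h := orz_O_w M hM (a := p) (d := q - p)
      rwa [show p + (q - p) = q by omega] at h
    have p1 : 0 < Real.sin (2 * Real.pi * ((q - p : ℕ):ℝ) / M) :=
      sin_frac_pos M hM (by omega) hshort
    have p2 : 0 < orz (wpt M p) (wpt M j) (wpt M q) :=
      orz_w_pos M hM hpj hjq (by omega)
    have e3 : orz (wpt M p) (wpt M q) (wpt M j) = - orz (wpt M p) (wpt M j) (wpt M q) := by
      rw [orz_swap]
    rw [e1, e2, e3]
    nlinarith

lemma exists_exit {V : Type*} {G : SimpleGraph V} {A : Set V} :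
    ∀ {u x : V} (_ : G.Walk u x), u ∈ A → x ∉ A → ∃ y z, y ∈ A ∧ z ∉ A ∧ G.Adj y z := by
  intro u x p
  induction p with
  | nil => intro hu hx; exact absurd hu hx
  | @cons a b c h q ih =>
      intro hu hx
      by_cases hb : b ∈ A
      · exact ih hb hx
      · exact ⟨a, b, hu, hb, h⟩

lemma acyclic_no_triangle {V : Type*} {G : SimpleGraph V} (hG : G.IsAcyclic)
    {a b c : V} (hab : G.Adj a b) (hbc : G.Adj b c) (hca : G.Adj c a) : False := by
  have hpu := SimpleGraph.isAcyclic_iff_path_unique.mp hG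
  have h1 : (SimpleGraph.Walk.cons hab SimpleGraph.Walk.nil : G.Walk a b).IsPath := by
    simp [SimpleGraph.Walk.isPath_def, hab.ne]
  have h2 : (SimpleGraph.Walk.cons hca.symm (SimpleGraph.Walk.cons hbc.symm SimpleGraph.Walk.nil) :
      G.Walk a b).IsPath := by
    simp [SimpleGraph.Walk.isPath_def, hca.ne', hbc.ne', hab.ne]
  have := hpu ⟨_, h1⟩ ⟨_, h2⟩
  have hw := congrArg (fun p : G.Path a b => (p : G.Walk a b).length) this
  simp [SimpleGraph.Walk.length_cons] at hw

lemma acyclic_no_quad {V : Type*} {G : SimpleGraph V} (hG : G.IsAcyclic)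
    {a b c d : V} (hab : G.Adj a b) (hbc : G.Adj b c) (hcd : G.Adj c d) (hda : G.Adj d a)
    (hac : a ≠ c) (hbd : b ≠ d) : False := by
  have hpu := SimpleGraph.isAcyclic_iff_path_unique.mp hG
  have h1 : (SimpleGraph.Walk.cons hab (SimpleGraph.Walk.cons hbc SimpleGraph.Walk.nil) :
      G.Walk a c).IsPath := by
    simp [SimpleGraph.Walk.isPath_def, hab.ne, hac, hbc.ne]
  have h2 : (SimpleGraph.Walk.cons hda.symm (SimpleGraph.Walk.cons hcd.symm SimpleGraph.Walk.nil) :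
      G.Walk a c).IsPath := by
    simp [SimpleGraph.Walk.isPath_def, hda.ne', hac, hcd.ne']
  have := hpu ⟨_, h1⟩ ⟨_, h2⟩
  have hw := congrArg (fun p : G.Path a c => (p : G.Walk a c).support) this
  simp [SimpleGraph.Walk.support_cons] at hw
  exact hbd hw

lemma exists_neighbor {V : Type*} {G : SimpleGraph V} (hc : G.Connected) {u x : V}
    (hne : u ≠ x) : ∃ z, G.Adj u z := by
  obtain ⟨p⟩ := hc.preconnected u x
  cases p with
  | nil => exact absurd rfl hne
  | cons h q => exact ⟨_, h⟩


-- statement-13 proof infrastructure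
lemma wheel_eq (n : ℕ) : wheel n = insert OO ((Finset.range (2*n-1)).image (wpt (2*n-1))) := rfl

lemma wpt_mem_wheel (n : ℕ) (hn : 0 < n) (j : ℕ) : wpt (2*n-1) j ∈ wheel n := by
  rw [wheel_eq, wpt_mod (2*n-1) (by omega) j]
  exact Finset.mem_insert_of_mem (Finset.mem_image_of_mem _
    (Finset.mem_range.mpr (Nat.mod_lt _ (by omega))))

noncomputable def vv (n : ℕ) (hn : 3 ≤ n) (j : ℕ) : {x // x ∈ wheel n} :=
  ⟨wpt (2*n-1) j, wpt_mem_wheel n (by omega) j⟩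

def cc (n : ℕ) : {x // x ∈ wheel n} :=
  ⟨OO, by rw [wheel_eq]; exact Finset.mem_insert_self _ _⟩

section
variable {n : ℕ} (hn : 3 ≤ n)

lemma vv_coe (j : ℕ) : ((vv n hn j : {x // x ∈ wheel n}) : Pt) = wpt (2*n-1) j := rfl

lemma vv_eq_iff {j k : ℕ} : vv n hn j = vv n hn k ↔ j % (2*n-1) = k % (2*n-1) := by
  constructor
  · intro h
    have h' : wpt (2*n-1) j = wpt (2*n-1) k := congrArg Subtype.val h
    rw [wpt_mod (2*n-1) (by omega) j, wpt_mod (2*n-1) (by omega) k] at h'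
    exact wpt_inj (2*n-1) (by omega) (Nat.mod_lt _ (by omega)) (Nat.mod_lt _ (by omega)) h'
  · intro h
    apply Subtype.ext
    show wpt (2*n-1) j = wpt (2*n-1) k
    rw [wpt_mod (2*n-1) (by omega) j, wpt_mod (2*n-1) (by omega) k, h]

lemma vv_period (j : ℕ) : vv n hn (j + (2*n-1)) = vv n hn j := by
  rw [vv_eq_iff hn]
  exact Nat.add_mod_right j (2*n-1)

lemma vv_ne_cc (j : ℕ) : vv n hn j ≠ cc n := by
  intro h
  exact wpt_ne_OO (2*n-1) j (congrArg Subtype.val h)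

lemma vert_class (z : {x // x ∈ wheel n}) : z = cc n ∨ ∃ j, j < 2*n-1 ∧ z = vv n hn j := by
  obtain ⟨zv, hz⟩ := z
  rw [wheel_eq] at hz
  rcases Finset.mem_insert.mp hz with h | h
  · left; exact Subtype.ext h
  · right
    obtain ⟨j, hj, hje⟩ := Finset.mem_image.mp h
    exact ⟨j, Finset.mem_range.mp hj, Subtype.ext hje.symm⟩

lemma vv_shift (x j : ℕ) : ∃ k, k < 2*n-1 ∧ vv n hn (x + k) = vv n hn j := by
  set M := 2*n-1 with hM
  have hM0 : 0 < M := by omega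
  set r := x % M with hr
  have hrM : r < M := Nat.mod_lt _ hM0
  refine ⟨(j + M - r) % M, Nat.mod_lt _ hM0, ?_⟩
  rw [vv_eq_iff hn]
  set k := (j + M - r) % M with hk
  have h1 : x + k ≡ x + (j + M - r) [MOD M] := Nat.ModEq.add_left x (Nat.mod_modEq _ M)
  have h2 : x + (j + M - r) ≡ r + (j + M - r) [MOD M] :=
    Nat.ModEq.add_right _ (Nat.mod_modEq x M).symm
  have h3 : r + (j + M - r) = j + M := by omega
  calc (x + k) % M = (r + (j + M - r)) % M := h1.trans h2
    _ = (j + M) % M := by rw [h3]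
    _ = j % M := Nat.add_mod_right j M
end

section
variable {n : ℕ} (hn : 3 ≤ n)

lemma plane_no_cross {G : SimpleGraph {x // x ∈ wheel n}} (hpl : IsPlaneGraph G)
    {a b c d : {x // x ∈ wheel n}} (hab : G.Adj a b) (hcd : G.Adj c d)
    (h1 : (a:Pt) ≠ (c:Pt)) (h2 : (a:Pt) ≠ (d:Pt)) (h3 : (b:Pt) ≠ (c:Pt)) (h4 : (b:Pt) ≠ (d:Pt))
    (hx : (openSegment ℝ (a:Pt) (b:Pt) ∩ openSegment ℝ (c:Pt) (d:Pt)).Nonempty) : False := by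
  have hne : s(a,b) ≠ s(c,d) := by
    intro hs
    rcases Sym2.eq_iff.mp hs with ⟨hac, hbd⟩ | ⟨had, hbc⟩
    · exact h1 (congrArg Subtype.val hac)
    · exact h2 (congrArg Subtype.val had)
  have := hpl a b c d hab hcd hne
  rw [this] at hx
  exact Set.not_nonempty_empty hx

/-- canonical form of a long chord -/
lemma canon {G : SimpleGraph {x // x ∈ wheel n}} {c : ℕ} (hc : c < 2*n-1)
    (h : G.Adj (vv n hn c) (vv n hn (c+(n-1)))) :
    ∃ l h', l < h' ∧ h' < 2*n-1 ∧ l + (n-1) ≤ h' ∧ h' ≤ l + n ∧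
      G.Adj (vv n hn l) (vv n hn h') ∧
      ((vv n hn l = vv n hn c ∧ vv n hn h' = vv n hn (c+(n-1))) ∨
       (vv n hn l = vv n hn (c+(n-1)) ∧ vv n hn h' = vv n hn c)) := by
  by_cases hcase : c + (n-1) < 2*n-1
  · exact ⟨c, c+(n-1), by omega, hcase, by omega, by omega, h, Or.inl ⟨rfl, rfl⟩⟩
  · refine ⟨c + (n-1) - (2*n-1), c, by omega, hc, by omega, by omega, ?_, Or.inr ⟨?_, rfl⟩⟩
    · have hl : vv n hn (c + (n-1) - (2*n-1)) = vv n hn (c + (n-1)) := by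
        have := vv_period hn (c + (n-1) - (2*n-1))
        rw [show c + (n-1) - (2*n-1) + (2*n-1) = c + (n-1) by omega] at this
        exact this.symm
      rw [hl]
      exact h.symm
    · have := vv_period hn (c + (n-1) - (2*n-1))
      rw [show c + (n-1) - (2*n-1) + (2*n-1) = c + (n-1) by omega] at this
      exact this.symm

lemma chords_share {G : SimpleGraph {x // x ∈ wheel n}} (hpl : IsPlaneGraph G)
    {a b : ℕ} (ha : a < 2*n-1) (hb : b < 2*n-1) (hab : a ≠ b)
    (h1 : G.Adj (vv n hn a) (vv n hn (a+(n-1)))) (h2 : G.Adj (vv n hn b) (vv n hn (b+(n-1)))) :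
    vv n hn (a+(n-1)) = vv n hn b ∨ vv n hn (b+(n-1)) = vv n hn a := by
  by_contra hcon
  push_neg at hcon
  obtain ⟨hs1, hs2⟩ := hcon
  set M := 2*n-1 with hM
  have hM0 : 0 < M := by omega
  have vinj : ∀ {j k : ℕ}, j < M → k < M → vv n hn j = vv n hn k → j = k := by
    intro j k hj hk h
    have := (vv_eq_iff hn).mp h
    rwa [Nat.mod_eq_of_lt hj, Nat.mod_eq_of_lt hk] at this
  -- vertex-level distinctness of the four endpoints
  have d1 : vv n hn a ≠ vv n hn b := fun h => hab (vinj ha hb h)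
  have d2 : vv n hn (a+(n-1)) ≠ vv n hn (b+(n-1)) := by
    intro h
    have h' := (vv_eq_iff hn).mp h
    have : a % M = b % M := Nat.ModEq.add_right_cancel' (n-1) h'
    exact hab (by rwa [Nat.mod_eq_of_lt ha, Nat.mod_eq_of_lt hb] at this)
  have d3 : vv n hn a ≠ vv n hn (a+(n-1)) := h1.ne
  have d4 : vv n hn b ≠ vv n hn (b+(n-1)) := h2.ne
  -- canonical forms
  obtain ⟨l1, k1, hlk1, hk1M, hlo1, hhi1, hadj1, hcan1⟩ := canon hn ha h1
  obtain ⟨l2, k2, hlk2, hk2M, hlo2, hhi2, hadj2, hcan2⟩ := canon hn hb h2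
  have hl1M : l1 < M := by omega
  have hl2M : l2 < M := by omega
  -- the four canonical indices are pairwise distinct
  have e1 : vv n hn l1 ≠ vv n hn l2 := by
    rcases hcan1 with ⟨ha1, hb1⟩ | ⟨ha1, hb1⟩ <;> rcases hcan2 with ⟨ha2, hb2⟩ | ⟨ha2, hb2⟩ <;>
        rw [ha1, ha2]
    · exact d1
    · exact (fun h => hs2 h.symm)
    · exact hs1
    · exact d2
  have e2 : vv n hn l1 ≠ vv n hn k2 := by
    rcases hcan1 with ⟨ha1, hb1⟩ | ⟨ha1, hb1⟩ <;> rcases hcan2 with ⟨ha2, hb2⟩ | ⟨ha2, hb2⟩ <;>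
        rw [ha1, hb2]
    · exact (fun h => hs2 h.symm)
    · exact d1
    · exact d2
    · exact hs1
  have e3 : vv n hn k1 ≠ vv n hn l2 := by
    rcases hcan1 with ⟨ha1, hb1⟩ | ⟨ha1, hb1⟩ <;> rcases hcan2 with ⟨ha2, hb2⟩ | ⟨ha2, hb2⟩ <;>
        rw [hb1, ha2]
    · exact hs1
    · exact d2
    · exact d1
    · exact (fun h => hs2 h.symm)
  have e4 : vv n hn k1 ≠ vv n hn k2 := by
    rcases hcan1 with ⟨ha1, hb1⟩ | ⟨ha1, hb1⟩ <;> rcases hcan2 with ⟨ha2, hb2⟩ | ⟨ha2, hb2⟩ <;>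
        rw [hb1, hb2]
    · exact d2
    · exact hs1
    · exact (fun h => hs2 h.symm)
    · exact d1
  have ne12 : l1 ≠ l2 := fun h => e1 (by rw [h])
  have ne1k2 : l1 ≠ k2 := fun h => e2 (by rw [h])
  have nek12 : k1 ≠ l2 := fun h => e3 (by rw [h])
  have nek1k2 : k1 ≠ k2 := fun h => e4 (by rw [h])
  -- core ordered argument
  have core : ∀ L1 H1 L2 H2 : ℕ, L1 < H1 → H1 < M → L1 + (n-1) ≤ H1 → H1 ≤ L1 + n →
      L2 < H2 → H2 < M → L2 + (n-1) ≤ H2 → H2 ≤ L2 + n →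
      L1 < L2 → L2 ≠ H1 → H1 ≠ H2 →
      G.Adj (vv n hn L1) (vv n hn H1) → G.Adj (vv n hn L2) (vv n hn H2) → False := by
    intro L1 H1 L2 H2 ho1 hm1 hlo1' hhi1' ho2 hm2 hlo2' hhi2' hord hne1 hne2 hA1 hA2
    have hord2 : L2 < H1 := by omega
    have hord3 : H1 < H2 := by omega
    have hcr := chord_cross M hM0 hord hord2 hord3 (by omega)
    apply plane_no_cross hpl hA1 hA2 ?_ ?_ ?_ ?_ hcr
    · exact fun h => (by omega : L1 ≠ L2) (wpt_inj M hM0 (by omega) (by omega) h)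
    · exact fun h => (by omega : L1 ≠ H2) (wpt_inj M hM0 (by omega) (by omega) h)
    · exact fun h => hne1.symm (wpt_inj M hM0 (by omega) (by omega) h)
    · exact fun h => hne2 (wpt_inj M hM0 (by omega) (by omega) h)
  rcases lt_trichotomy l1 l2 with hlt | heq | hgt
  · exact core l1 k1 l2 k2 hlk1 hk1M hlo1 hhi1 hlk2 hk2M hlo2 hhi2 hlt (Ne.symm nek12) nek1k2 hadj1 hadj2
  · exact ne12 heq
  · exact core l2 k2 l1 k1 hlk2 hk2M hlo2 hhi2 hlk1 hk1M hlo1 hhi1 hgt ne1k2 (Ne.symm nek1k2) hadj2 hadj1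

lemma wpt_add_period {M : ℕ} (hM : 0 < M) (x : ℕ) : wpt M (x + M) = wpt M x := by
  rw [wpt_mod M hM (x+M), Nat.add_mod_right, ← wpt_mod M hM]

lemma vcan {x k k' : ℕ} (hk : k < 2*n-1) (hk' : k' < 2*n-1)
    (h : vv n hn (x+k) = vv n hn (x+k')) : k = k' := by
  have h' := (vv_eq_iff hn).mp h
  have h2 : k + x ≡ k' + x [MOD 2*n-1] := by
    show (k + x) % (2*n-1) = (k' + x) % (2*n-1)
    rw [Nat.add_comm k, Nat.add_comm k']; exact h'
  have := Nat.ModEq.add_right_cancel' x h2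
  rwa [Nat.ModEq, Nat.mod_eq_of_lt hk, Nat.mod_eq_of_lt hk'] at this

lemma wxne (hn3 : 3 ≤ n) (x : ℕ) {k k' : ℕ} (hk : k < 2*n-1) (hk' : k' < 2*n-1) (hne : k ≠ k') :
    wpt (2*n-1) (x+k) ≠ wpt (2*n-1) (x+k') :=
  fun h => hne (vcan hn3 hk hk' (Subtype.ext h))

lemma vvxne (x : ℕ) {k k' : ℕ} (hk : k < 2*n-1) (hk' : k' < 2*n-1) (hne : k ≠ k') :
    vv n hn (x+k) ≠ vv n hn (x+k') :=
  fun h => hne (vcan hn hk hk' h)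

/-- spokes of a cherry tree go to the three special vertices -/
lemma spoke_class {G : SimpleGraph {x // x ∈ wheel n}} (hpl : IsPlaneGraph G) {x j : ℕ}
    (h1 : G.Adj (vv n hn x) (vv n hn (x+(n-1)))) (h2 : G.Adj (vv n hn x) (vv n hn (x+n)))
    (hj : G.Adj (cc n) (vv n hn j)) :
    vv n hn j = vv n hn x ∨ vv n hn j = vv n hn (x+(n-1)) ∨ vv n hn j = vv n hn (x+n) := by
  set M := 2*n-1 with hM
  have hM0 : 0 < M := by omega
  obtain ⟨k, hkM, hk⟩ := vv_shift hn x j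
  rw [← hk]
  have hkco : ((vv n hn j : Pt)) = wpt M (x + k) := congrArg Subtype.val hk.symm
  rcases (by omega : k = 0 ∨ (1 ≤ k ∧ k ≤ n-2) ∨ k = n-1 ∨ k = n ∨ (n+1 ≤ k ∧ k ≤ M-1))
    with h0 | hA | hB | hC | hD
  · left; rw [h0, Nat.add_zero]
  · exfalso
    have hcr := spoke_cross M hM0 (p := x) (j := x+k) (q := x+(n-1))
      (by omega) (by omega) (by omega)
    apply plane_no_cross hpl hj h1 ?_ ?_ ?_ ?_ ?_
    · exact (wpt_ne_OO M x).symm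
    · exact (wpt_ne_OO M (x+(n-1))).symm
    · rw [hkco]
      have := wxne hn x (k' := 0) hkM (by omega) (by omega)
      rwa [Nat.add_zero] at this
    · rw [hkco]; exact wxne hn x (k' := n-1) hkM (by omega) (by omega)
    · rw [hkco]; exact hcr
  · right; left; rw [hB]
  · right; right; rw [hC]
  · exfalso
    have hcr := spoke_cross M hM0 (p := x+n) (j := x+k) (q := x+M)
      (by omega) (by omega) (by omega)
    rw [wpt_add_period hM0 x] at hcr
    apply plane_no_cross hpl hj h2.symm ?_ ?_ ?_ ?_ ?_
    · exact (wpt_ne_OO M (x+n)).symm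
    · exact (wpt_ne_OO M x).symm
    · rw [hkco]; exact wxne hn x (k' := n) hkM (by omega) (by omega)
    · rw [hkco]
      have := wxne hn x (k' := 0) hkM (by omega) (by omega)
      rwa [Nat.add_zero] at this
    · rw [hkco]; exact hcr

/-- a cherry tree has at most one spoke -/
lemma cherry_spokes_eq {G : SimpleGraph {x // x ∈ wheel n}} (hpl : IsPlaneGraph G)
    (hac : G.IsAcyclic) {x : ℕ}
    (h1 : G.Adj (vv n hn x) (vv n hn (x+(n-1)))) (h2 : G.Adj (vv n hn x) (vv n hn (x+n)))
    {j j' : ℕ} (hj : G.Adj (cc n) (vv n hn j)) (hj' : G.Adj (cc n) (vv n hn j')) :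
    vv n hn j = vv n hn j' := by
  have hne1 : vv n hn (x+(n-1)) ≠ vv n hn (x+n) := vvxne hn x (by omega) (by omega) (by omega)
  have hnx1 : vv n hn x ≠ vv n hn (x+(n-1)) := by
    have := vvxne hn x (k := 0) (k' := n-1) (by omega) (by omega) (by omega)
    rwa [Nat.add_zero] at this
  have hnx2 : vv n hn x ≠ vv n hn (x+n) := by
    have := vvxne hn x (k := 0) (k' := n) (by omega) (by omega) (by omega)
    rwa [Nat.add_zero] at this
  by_contra hcon
  rcases spoke_class hn hpl h1 h2 hj with e | e | e <;>
    rcases spoke_class hn hpl h1 h2 hj' with e' | e' | e' <;>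
    rw [e] at hj hcon <;> rw [e'] at hj' hcon
  · exact hcon rfl
  · exact acyclic_no_triangle hac hj h1 hj'.symm
  · exact acyclic_no_triangle hac hj h2 hj'.symm
  · exact acyclic_no_triangle hac hj' h1 hj.symm
  · exact hcon rfl
  · exact acyclic_no_quad hac hj h1.symm h2 hj'.symm (vv_ne_cc hn x).symm hne1
  · exact acyclic_no_triangle hac hj' h2 hj.symm
  · exact acyclic_no_quad hac hj' h1.symm h2 hj.symm (vv_ne_cc hn x).symm hne1
  · exact hcon rfl

/-- a cherry tree has a vertex with three distinct neighbours -/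
lemma cherry_deg3 {G : SimpleGraph {x // x ∈ wheel n}} (htree : G.IsTree)
    (hpl : IsPlaneGraph G) {x : ℕ}
    (h1 : G.Adj (vv n hn x) (vv n hn (x+(n-1)))) (h2 : G.Adj (vv n hn x) (vv n hn (x+n))) :
    ∃ v a b c : {x // x ∈ wheel n},
      a ≠ b ∧ a ≠ c ∧ b ≠ c ∧ G.Adj v a ∧ G.Adj v b ∧ G.Adj v c := by
  set M := 2*n-1 with hMdef
  have hM0 : 0 < M := by omega
  have hne1 : vv n hn (x+(n-1)) ≠ vv n hn (x+n) := vvxne hn x (by omega) (by omega) (by omega)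
  have hnx1 : vv n hn x ≠ vv n hn (x+(n-1)) := by
    have := vvxne hn x (k := 0) (k' := n-1) (by omega) (by omega) (by omega)
    rwa [Nat.add_zero] at this
  have hnx2 : vv n hn x ≠ vv n hn (x+n) := by
    have := vvxne hn x (k := 0) (k' := n) (by omega) (by omega) (by omega)
    rwa [Nat.add_zero] at this
  by_cases hdeg : ∃ z, G.Adj (vv n hn x) z ∧ z ≠ vv n hn (x+(n-1)) ∧ z ≠ vv n hn (x+n)
  · obtain ⟨z, hz, hz1, hz2⟩ := hdeg
    exact ⟨vv n hn x, vv n hn (x+(n-1)), vv n hn (x+n), z, hne1,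
      fun h => hz1 h.symm, fun h => hz2 h.symm, h1, h2, hz⟩
  · -- no third neighbour of the apex
    have hdeg' : ∀ z, G.Adj (vv n hn x) z → z = vv n hn (x+(n-1)) ∨ z = vv n hn (x+n) := by
      intro z hz
      by_contra h'
      push_neg at h'
      exact hdeg ⟨z, hz, h'.1, h'.2⟩
    have hx0 : vv n hn x = vv n hn (x+0) := by rw [Nat.add_zero]
    obtain ⟨u, hu⟩ := exists_neighbor htree.isConnected (x := vv n hn x) (vv_ne_cc hn x).symm
    rcases vert_class hn u with huc | ⟨j, hjM, hje⟩
    · rw [huc] at hu; exact absurd hu (G.irrefl)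
    rw [hje] at hu
    rcases spoke_class hn hpl h1 h2 hu with e | e | e
    · exfalso
      rw [e] at hu
      rcases hdeg' (cc n) hu.symm with h | h
      · exact absurd h.symm (vv_ne_cc hn _)
      · exact absurd h.symm (vv_ne_cc hn _)
    · -- the unique spoke goes to x+(n-1); explore the near side
      rw [e] at hu
      set A : Set {p // p ∈ wheel n} := {z | ∃ k, 1 ≤ k ∧ k ≤ n-2 ∧ z = vv n hn (x+k)} with hA
      have hstart : vv n hn (x+1) ∈ A := ⟨1, le_refl 1, by omega, rfl⟩
      have hccA : cc n ∉ A := by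
        rintro ⟨k, -, -, hk⟩
        exact vv_ne_cc hn (x+k) hk.symm
      obtain ⟨p⟩ := htree.isConnected.preconnected (vv n hn (x+1)) (cc n)
      obtain ⟨y, z, hyA, hzA, hyz⟩ := exists_exit p hstart hccA
      obtain ⟨k, hk1, hk2, hyk⟩ := hyA
      rw [hyk] at hyz
      rcases vert_class hn z with hzc | ⟨j', hj'M, hj'e⟩
      · exfalso
        rw [hzc] at hyz
        rcases spoke_class hn hpl h1 h2 hyz.symm with f | f | f
        · exact vvxne hn x (k := k) (k' := 0) (by omega) (by omega) (by omega) (f.trans hx0)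
        · exact vvxne hn x (by omega) (by omega) (by omega) f
        · exact vvxne hn x (by omega) (by omega) (by omega) f
      · obtain ⟨k', hk'M, hk'⟩ := vv_shift hn x j'
        have hze : z = vv n hn (x+k') := by rw [hj'e, ← hk']
        rw [hze] at hyz hzA
        rcases (by omega : k' = 0 ∨ (1 ≤ k' ∧ k' ≤ n-2) ∨ k' = n-1 ∨ (n ≤ k' ∧ k' ≤ M-1))
          with f0 | fA | fB | fC
        · exfalso
          rw [f0, Nat.add_zero] at hyz
          rcases hdeg' _ hyz.symm with h | h
          · exact vvxne hn x (by omega) (by omega) (by omega) h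
          · exact vvxne hn x (by omega) (by omega) (by omega) h
        · exact absurd ⟨k', fA.1, fA.2, rfl⟩ hzA
        · rw [fB] at hyz
          refine ⟨vv n hn (x+(n-1)), vv n hn x, cc n, vv n hn (x+k), vv_ne_cc hn x, ?_, ?_,
            h1.symm, hu.symm, hyz.symm⟩
          · exact fun h => vvxne hn x (k := k) (k' := 0) (by omega) (by omega) (by omega)
              ((h.symm).trans hx0)
          · exact (vv_ne_cc hn (x+k)).symm
        · exfalso
          have hcr := chord_cross M hM0 (x1 := x) (x2 := x+k) (x3 := x+(n-1)) (x4 := x+k')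
            (by omega) (by omega) (by omega) (by omega)
          apply plane_no_cross hpl h1 hyz ?_ ?_ ?_ ?_ ?_
          · have := wxne hn x (k := 0) (k' := k) (by omega) (by omega) (by omega)
            rwa [Nat.add_zero] at this
          · have := wxne hn x (k := 0) (k' := k') (by omega) (by omega) (by omega)
            rwa [Nat.add_zero] at this
          · exact wxne hn x (by omega) (by omega) (by omega)
          · exact wxne hn x (by omega) (by omega) (by omega)
          · exact hcr
    · -- the unique spoke goes to x+n; explore the far side
      rw [e] at hu
      set A : Set {p // p ∈ wheel n} := {z | ∃ k, n+1 ≤ k ∧ k ≤ M-1 ∧ z = vv n hn (x+k)} with hA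
      have hstart : vv n hn (x+(n+1)) ∈ A := ⟨n+1, le_refl _, by omega, rfl⟩
      have hccA : cc n ∉ A := by
        rintro ⟨k, -, -, hk⟩
        exact vv_ne_cc hn (x+k) hk.symm
      obtain ⟨p⟩ := htree.isConnected.preconnected (vv n hn (x+(n+1))) (cc n)
      obtain ⟨y, z, hyA, hzA, hyz⟩ := exists_exit p hstart hccA
      obtain ⟨k, hk1, hk2, hyk⟩ := hyA
      rw [hyk] at hyz
      rcases vert_class hn z with hzc | ⟨j', hj'M, hj'e⟩
      · exfalso
        rw [hzc] at hyz
        rcases spoke_class hn hpl h1 h2 hyz.symm with f | f | f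
        · exact vvxne hn x (k := k) (k' := 0) (by omega) (by omega) (by omega) (f.trans hx0)
        · exact vvxne hn x (by omega) (by omega) (by omega) f
        · exact vvxne hn x (by omega) (by omega) (by omega) f
      · obtain ⟨k', hk'M, hk'⟩ := vv_shift hn x j'
        have hze : z = vv n hn (x+k') := by rw [hj'e, ← hk']
        rw [hze] at hyz hzA
        rcases (by omega : k' = 0 ∨ (1 ≤ k' ∧ k' ≤ n-1) ∨ k' = n ∨ (n+1 ≤ k' ∧ k' ≤ M-1))
          with f0 | fA | fB | fC
        · exfalso
          rw [f0, Nat.add_zero] at hyz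
          rcases hdeg' _ hyz.symm with h | h
          · exact vvxne hn x (by omega) (by omega) (by omega) h
          · exact vvxne hn x (by omega) (by omega) (by omega) h
        · exfalso
          have hcr := chord_cross M hM0 (x1 := x+k') (x2 := x+n) (x3 := x+k) (x4 := x+M)
            (by omega) (by omega) (by omega) (by omega)
          rw [wpt_add_period hM0 x] at hcr
          apply plane_no_cross hpl hyz.symm h2.symm ?_ ?_ ?_ ?_ ?_
          · exact wxne hn x (by omega) (by omega) (by omega)
          · have := wxne hn x (k := k') (k' := 0) (by omega) (by omega) (by omega)
            rwa [Nat.add_zero] at this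
          · exact wxne hn x (by omega) (by omega) (by omega)
          · have := wxne hn x (k := k) (k' := 0) (by omega) (by omega) (by omega)
            rwa [Nat.add_zero] at this
          · exact hcr
        · rw [fB] at hyz
          refine ⟨vv n hn (x+n), vv n hn x, cc n, vv n hn (x+k), vv_ne_cc hn x, ?_, ?_,
            h2.symm, hu.symm, hyz.symm⟩
          · exact fun h => vvxne hn x (k := k) (k' := 0) (by omega) (by omega) (by omega)
              ((h.symm).trans hx0)
          · exact (vv_ne_cc hn (x+k)).symm
        · exact absurd ⟨k', fC.1, fC.2, rfl⟩ hzA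


end

/-- For `n ≥ 3`, in any partition of the complete geometric graph on the
wheel `W_{2n}` into `n` plane spanning trees, no tree is a Hamiltonian path: each tree
has a vertex of degree at least 3 (three distinct neighbors). -/
theorem wheel_partition_no_path (n : ℕ) (hn : 3 ≤ n)
    (T : Fin n → SimpleGraph {x // x ∈ wheel n})
    (htree : ∀ i, IsPlaneSpanningTree (T i))
    (hdisj : ∀ i j, i ≠ j → Disjoint (T i).edgeSet (T j).edgeSet)
    (hcover : ∀ a b : {x // x ∈ wheel n}, a ≠ b → ∃ i, (T i).Adj a b) :
    ∀ i, ∃ v a b c : {x // x ∈ wheel n},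
      a ≠ b ∧ a ≠ c ∧ b ≠ c ∧ (T i).Adj v a ∧ (T i).Adj v b ∧ (T i).Adj v c := by
  classical
  intro i0
  set M := 2*n-1 with hMdef
  have hM0 : 0 < M := by omega
  have hvne : ∀ a : ℕ, vv n hn a ≠ vv n hn (a+(n-1)) := by
    intro a
    have := vvxne hn a (k := 0) (k' := n-1) (by omega) (by omega) (by omega)
    rwa [Nat.add_zero] at this
  choose F hF using fun a : ℕ => hcover (vv n hn a) (vv n hn (a+(n-1))) (hvne a)
  choose S hS using fun j : ℕ => hcover (cc n) (vv n hn j) (vv_ne_cc hn j).symm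
  set cnt : Fin n → ℕ := fun i => ((Finset.range M).filter (fun a => F a = i)).card with hcnt
  have hsum : ∑ i, cnt i = M := by
    rw [hcnt]
    rw [← Finset.card_eq_sum_card_fiberwise (f := F) (s := Finset.range M)
      (t := Finset.univ) (fun x _ => Finset.mem_univ _)]
    exact Finset.card_range M
  -- helper : convert vv equality to numeric statement
  have vnum : ∀ {a b : ℕ}, a < M → b < M → vv n hn a = vv n hn b → a = b := by
    intro a b ha hb h
    have := (vv_eq_iff hn).mp h
    rwa [Nat.mod_eq_of_lt ha, Nat.mod_eq_of_lt hb] at this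
  have hshift_eq : ∀ {a b : ℕ}, a < M → b < M → vv n hn (a+(n-1)) = vv n hn b →
      (b = a + (n-1) ∨ b + M = a + (n-1)) := by
    intro a b ha hb h
    have h' := (vv_eq_iff hn).mp h
    rw [Nat.mod_eq_of_lt hb] at h'
    by_cases hc : a + (n-1) < M
    · rw [Nat.mod_eq_of_lt hc] at h'; omega
    · rw [Nat.mod_eq_sub_mod (by omega), Nat.mod_eq_of_lt (by omega)] at h'
      omega
  -- each tree contains at most two long chords
  have hcnt2 : ∀ i, cnt i ≤ 2 := by
    intro i
    by_contra hcon
    obtain ⟨a, b, c, ha, hb, hc, hab, hac, hbc⟩ :=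
      Finset.two_lt_card_iff.mp (show 2 < cnt i by omega)
    rw [Finset.mem_filter, Finset.mem_range] at ha hb hc
    have hTa : (T i).Adj (vv n hn a) (vv n hn (a+(n-1))) := by rw [← ha.2]; exact hF a
    have hTb : (T i).Adj (vv n hn b) (vv n hn (b+(n-1))) := by rw [← hb.2]; exact hF b
    have hTc : (T i).Adj (vv n hn c) (vv n hn (c+(n-1))) := by rw [← hc.2]; exact hF c
    have sab := chords_share hn (htree i).2 ha.1 hb.1 hab hTa hTb
    have sac := chords_share hn (htree i).2 ha.1 hc.1 hac hTa hTc
    have sbc := chords_share hn (htree i).2 hb.1 hc.1 hbc hTb hTc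
    have nab : (b = a + (n-1) ∨ b + M = a + (n-1)) ∨ (a = b + (n-1) ∨ a + M = b + (n-1)) := by
      rcases sab with h | h
      · exact Or.inl (hshift_eq ha.1 hb.1 h)
      · exact Or.inr (hshift_eq hb.1 ha.1 h)
    have nac : (c = a + (n-1) ∨ c + M = a + (n-1)) ∨ (a = c + (n-1) ∨ a + M = c + (n-1)) := by
      rcases sac with h | h
      · exact Or.inl (hshift_eq ha.1 hc.1 h)
      · exact Or.inr (hshift_eq hc.1 ha.1 h)
    have nbc : (c = b + (n-1) ∨ c + M = b + (n-1)) ∨ (b = c + (n-1) ∨ b + M = c + (n-1)) := by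
      rcases sbc with h | h
      · exact Or.inl (hshift_eq hb.1 hc.1 h)
      · exact Or.inr (hshift_eq hc.1 hb.1 h)
    omega
  -- at most one tree has at most one long chord
  have hmost : ∀ i i', cnt i ≤ 1 → cnt i' ≤ 1 → i = i' := by
    intro i i' hi hi'
    by_contra hne
    have hmem : i' ∈ Finset.univ.erase i := Finset.mem_erase.mpr ⟨Ne.symm hne, Finset.mem_univ _⟩
    have e1 : ∑ j, cnt j = cnt i + ∑ j ∈ Finset.univ.erase i, cnt j :=
      (Finset.add_sum_erase _ _ (Finset.mem_univ i)).symm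
    have e2 : ∑ j ∈ Finset.univ.erase i, cnt j
        = cnt i' + ∑ j ∈ (Finset.univ.erase i).erase i', cnt j :=
      (Finset.add_sum_erase _ _ hmem).symm
    have e3 : ∑ j ∈ (Finset.univ.erase i).erase i', cnt j
        ≤ ((Finset.univ.erase i).erase i').card * 2 := by
      have := Finset.sum_le_card_nsmul ((Finset.univ.erase i).erase i') cnt 2
        (fun x _ => hcnt2 x)
      simpa [smul_eq_mul] using this
    have e4 : ((Finset.univ.erase i).erase i').card = n - 2 := by
      rw [Finset.card_erase_of_mem hmem, Finset.card_erase_of_mem (Finset.mem_univ i)]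
      simp only [Finset.card_univ, Fintype.card_fin]
      omega
    omega
  -- a tree with exactly two long chords is a cherry
  have cherryOf : ∀ i, cnt i = 2 → ∃ x, (T i).Adj (vv n hn x) (vv n hn (x+(n-1)))
      ∧ (T i).Adj (vv n hn x) (vv n hn (x+n)) := by
    intro i h2
    obtain ⟨a, b, ha, hb, hab⟩ := Finset.one_lt_card_iff.mp (show 1 < cnt i by omega)
    rw [Finset.mem_filter, Finset.mem_range] at ha hb
    have hTa : (T i).Adj (vv n hn a) (vv n hn (a+(n-1))) := by rw [← ha.2]; exact hF a
    have hTb : (T i).Adj (vv n hn b) (vv n hn (b+(n-1))) := by rw [← hb.2]; exact hF b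
    rcases chords_share hn (htree i).2 ha.1 hb.1 hab hTa hTb with h | h
    · refine ⟨a + (n-1), ?_, ?_⟩
      · -- chord b, transported
        have e1 : vv n hn (b+(n-1)) = vv n hn (a+(n-1)+(n-1)) := by
          have := (vv_eq_iff hn).mpr (show (b+(n-1)) % M = (a+(n-1)+(n-1)) % M from ?_)
          · exact this
          · have hb' := (vv_eq_iff hn).mp h.symm
            exact Nat.ModEq.add_right (n-1) hb'
        rw [e1, ← h] at hTb
        exact hTb
      · have e2 : vv n hn a = vv n hn (a+(n-1)+n) := by
          have : a + (n-1) + n = a + M := by omega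
          rw [this, vv_period hn a]
        rw [e2] at hTa
        exact hTa.symm
    · refine ⟨b + (n-1), ?_, ?_⟩
      · have e1 : vv n hn (a+(n-1)) = vv n hn (b+(n-1)+(n-1)) := by
          have ha' := (vv_eq_iff hn).mp h.symm
          exact (vv_eq_iff hn).mpr (Nat.ModEq.add_right (n-1) ha')
        rw [e1, ← h] at hTa
        exact hTa
      · have e2 : vv n hn b = vv n hn (b+(n-1)+n) := by
          have : b + (n-1) + n = b + M := by omega
          rw [this, vv_period hn b]
        rw [e2] at hTb
        exact hTb.symm
  by_cases hcase : cnt i0 ≤ 1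
  · -- exceptional tree: it carries at least n spokes
    set scnt : Fin n → ℕ := fun i => ((Finset.range M).filter (fun j => S j = i)).card with hscnt
    have hssum : ∑ i, scnt i = M := by
      rw [hscnt]
      rw [← Finset.card_eq_sum_card_fiberwise (f := S) (s := Finset.range M)
        (t := Finset.univ) (fun x _ => Finset.mem_univ _)]
      exact Finset.card_range M
    have hsle : ∀ i, i ≠ i0 → scnt i ≤ 1 := by
      intro i hne
      have h2 : cnt i = 2 := by
        rcases Nat.lt_or_ge (cnt i) 2 with h | h
        · exact absurd (hmost i i0 (by omega) hcase) hne
        · exact le_antisymm (hcnt2 i) h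
      obtain ⟨x, hx1, hx2⟩ := cherryOf i h2
      by_contra hcon
      obtain ⟨j, j', hj, hj', hjj⟩ := Finset.one_lt_card_iff.mp (show 1 < scnt i by omega)
      rw [Finset.mem_filter, Finset.mem_range] at hj hj'
      have hSj : (T i).Adj (cc n) (vv n hn j) := by rw [← hj.2]; exact hS j
      have hSj' : (T i).Adj (cc n) (vv n hn j') := by rw [← hj'.2]; exact hS j'
      exact hjj (vnum hj.1 hj'.1
        (cherry_spokes_eq hn (htree i).2 (htree i).1.IsAcyclic hx1 hx2 hSj hSj'))
    have hbig : n ≤ scnt i0 := by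
      have e1 : ∑ j, scnt j = scnt i0 + ∑ j ∈ Finset.univ.erase i0, scnt j :=
        (Finset.add_sum_erase _ _ (Finset.mem_univ i0)).symm
      have e3 : ∑ j ∈ Finset.univ.erase i0, scnt j ≤ (Finset.univ.erase i0).card * 1 := by
        have := Finset.sum_le_card_nsmul (Finset.univ.erase i0) scnt 1
          (fun x hx => hsle x (Finset.mem_erase.mp hx).1)
        simpa [smul_eq_mul] using this
      have e4 : (Finset.univ.erase i0).card = n - 1 := by
        rw [Finset.card_erase_of_mem (Finset.mem_univ i0)]
        simp only [Finset.card_univ, Fintype.card_fin]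
      omega
    obtain ⟨j1, j2, j3, hj1, hj2, hj3, d12, d13, d23⟩ :=
      Finset.two_lt_card_iff.mp (show 2 < scnt i0 by omega)
    rw [Finset.mem_filter, Finset.mem_range] at hj1 hj2 hj3
    refine ⟨cc n, vv n hn j1, vv n hn j2, vv n hn j3, ?_, ?_, ?_, ?_, ?_, ?_⟩
    · exact fun h => d12 (vnum hj1.1 hj2.1 h)
    · exact fun h => d13 (vnum hj1.1 hj3.1 h)
    · exact fun h => d23 (vnum hj2.1 hj3.1 h)
    · rw [← hj1.2]; exact hS j1
    · rw [← hj2.2]; exact hS j2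
    · rw [← hj3.2]; exact hS j3
  · have h2 : cnt i0 = 2 := le_antisymm (hcnt2 i0) (by omega)
    obtain ⟨x, hx1, hx2⟩ := cherryOf i0 h2
    exact cherry_deg3 hn (htree i0).1 (htree i0).2 hx1 hx2
end

section
/- Let S be a set of n points in the plane in general position and let j be an integer with 0 ≤ j ≤ n−2. Then there exist two distinct points r, b ∈ S such that exactly j points of S lie strictly on one side of the line through r and b (i.e., strictly to the left of the directed line from r to b). -/
lemma cross_trans (u1 u2 v1 v2 w1 w2 : ℝ)
    (hu : 0 < u2 ∨ (u2 = 0 ∧ 0 < u1))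
    (hv : 0 < v2 ∨ (v2 = 0 ∧ 0 < v1))
    (hw : 0 < w2 ∨ (w2 = 0 ∧ 0 < w1))
    (h1 : 0 < u1 * v2 - u2 * v1)
    (h2 : 0 < v1 * w2 - v2 * w1) :
    0 < u1 * w2 - u2 * w1 := by
  have hu2 : 0 ≤ u2 := by rcases hu with h | ⟨h, _⟩ <;> linarith
  have hw2 : 0 ≤ w2 := by rcases hw with h | ⟨h, _⟩ <;> linarith
  rcases hv with hv2 | ⟨hv2, hv1⟩
  · by_cases hu0 : u2 = 0
    · have hu1 : 0 < u1 := by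
        rcases hu with h | ⟨_, h⟩
        · exact absurd hu0 (ne_of_gt h)
        · exact h
      have hw2' : 0 < w2 := by
        rcases hw with h | ⟨h0, h1'⟩
        · exact h
        · exfalso; rw [h0] at h2; nlinarith [mul_pos hv2 h1']
      rw [hu0]; nlinarith
    · have hu2' : 0 < u2 := lt_of_le_of_ne hu2 (Ne.symm hu0)
      have key : (u1 * w2 - u2 * w1) * v2
          = (u1 * v2 - u2 * v1) * w2 + (v1 * w2 - v2 * w1) * u2 := by ring
      nlinarith [mul_pos h2 hu2', mul_nonneg (le_of_lt h1) hw2]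
  · exfalso
    rw [hv2] at h1
    nlinarith [mul_nonneg hu2 (le_of_lt hv1)]

lemma collinear_of_cross (r p q : Pt) (hpr : p ≠ r)
    (h : (p.1 - r.1) * (q.2 - r.2) - (p.2 - r.2) * (q.1 - r.1) = 0) :
    Collinear ℝ ({r, p, q} : Set Pt) := by
  rw [collinear_iff_of_mem (Set.mem_insert r _)]
  refine ⟨(p.1 - r.1, p.2 - r.2), ?_⟩
  have key : ∃ c : ℝ, q = c • ((p.1 - r.1, p.2 - r.2) : Pt) +ᵥ r := by
    by_cases h1 : p.1 - r.1 = 0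
    · have h2 : p.2 - r.2 ≠ 0 := by
        intro h2; exact hpr (Prod.ext (by linarith) (by linarith))
      have hq1 : q.1 - r.1 = 0 := by
        rw [h1] at h
        rcases mul_eq_zero.mp (by linarith : (p.2 - r.2) * (q.1 - r.1) = 0) with h' | h'
        · exact absurd h' h2
        · exact h'
      refine ⟨(q.2 - r.2) / (p.2 - r.2), Prod.ext ?_ ?_⟩
      · show q.1 = (q.2 - r.2) / (p.2 - r.2) * (p.1 - r.1) + r.1
        rw [h1]; simp; linarith
      · show q.2 = (q.2 - r.2) / (p.2 - r.2) * (p.2 - r.2) + r.2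
        field_simp
        ring
    · refine ⟨(q.1 - r.1) / (p.1 - r.1), Prod.ext ?_ ?_⟩
      · show q.1 = (q.1 - r.1) / (p.1 - r.1) * (p.1 - r.1) + r.1
        field_simp
        ring
      · show q.2 = (q.1 - r.1) / (p.1 - r.1) * (p.2 - r.2) + r.2
        have h2 : q.2 - r.2 = (q.1 - r.1) * (p.2 - r.2) / (p.1 - r.1) := by
          rw [eq_div_iff h1]; nlinarith [h]
        rw [div_mul_eq_mul_div]; linarith [h2]
  intro x hx
  rcases hx with rfl | hx
  · exact ⟨0, by simp⟩
  rcases hx with rfl | hx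
  · exact ⟨1, by refine Prod.ext ?_ ?_ <;> show _ = _ <;> simp⟩
  rcases hx with rfl
  exact key

/-- For a set `S` of `n` points in general position and any
`0 ≤ j ≤ n − 2`, there are two distinct points `r, b ∈ S` such that exactly `j`
points of `S` lie strictly to the left of the directed line from `r` to `b`. -/
theorem exists_j_edge (S : Finset Pt) (n : ℕ) (hS : S.card = n) (hgp : GenPos S)
    (j : ℕ) (hj : j + 2 ≤ n) :
    ∃ r ∈ S, ∃ b ∈ S, r ≠ b ∧ {x ∈ (S : Set Pt) | leftOf r b x}.ncard = j := by
  classical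
  have hn2 : 2 ≤ n := le_trans (by omega) hj
  have hSne : S.Nonempty := by
    rw [← Finset.card_pos, hS]; omega
  -- pick r minimizing (y, x) lexicographically
  obtain ⟨r, hrS, hrmin⟩ := S.exists_min_image (fun p => toLex (p.2, p.1)) hSne
  -- every other point is in the open upper half plane (or right horizontal ray) of r
  have hhalf : ∀ p ∈ S, p ≠ r → 0 < p.2 - r.2 ∨ (p.2 - r.2 = 0 ∧ 0 < p.1 - r.1) := by
    intro p hp hne
    have := hrmin p hp
    rw [Prod.Lex.le_iff] at this
    rcases this with h | ⟨h1, h2⟩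
    · left; simp only [ofLex_toLex] at h; linarith
    · right
      simp only [ofLex_toLex] at h1 h2
      refine ⟨by linarith, ?_⟩
      rcases lt_or_eq_of_le h2 with h3 | h3
      · linarith
      · exfalso; exact hne (Prod.ext (by linarith) (by linarith))
  set T : Finset Pt := S.erase r with hT
  have hTcard : T.card = n - 1 := by rw [hT, Finset.card_erase_of_mem hrS, hS]
  have hTS : ∀ x ∈ T, x ∈ S := fun x hx => Finset.mem_of_mem_erase hx
  have hTr : ∀ x ∈ T, x ≠ r := fun x hx => Finset.ne_of_mem_erase hx
  -- leftOf r is irreflexive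
  have hirr : ∀ b : Pt, ¬ leftOf r b b := by
    intro b hb
    unfold leftOf at hb
    nlinarith [hb]
  -- trichotomy on T
  have htri : ∀ a ∈ T, ∀ b ∈ T, a ≠ b → leftOf r a b ∨ leftOf r b a := by
    intro a ha b hb hab
    have hcol := hgp r hrS a (hTS a ha) b (hTS b hb)
      (Ne.symm (hTr a ha)) (Ne.symm (hTr b hb)) hab
    have hne : (a.1 - r.1) * (b.2 - r.2) - (a.2 - r.2) * (b.1 - r.1) ≠ 0 := by
      intro h0
      exact hcol (collinear_of_cross r a b (hTr a ha) h0)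
    rcases lt_or_gt_of_ne hne with h | h
    · right; unfold leftOf; nlinarith [h]
    · left; exact h
  -- transitivity on T
  have htrans : ∀ a ∈ T, ∀ b ∈ T, ∀ c ∈ T,
      leftOf r a b → leftOf r b c → leftOf r a c := by
    intro a ha b hb c hc h1 h2
    have hua := hhalf a (hTS a ha) (hTr a ha)
    have hub := hhalf b (hTS b hb) (hTr b hb)
    have huc := hhalf c (hTS c hc) (hTr c hc)
    exact cross_trans (a.1 - r.1) (a.2 - r.2) (b.1 - r.1) (b.2 - r.2)
      (c.1 - r.1) (c.2 - r.2)
      (by tauto) (by tauto) (by tauto) h1 h2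
  -- counting function
  set f : Pt → ℕ := fun b => (T.filter (fun x => leftOf r b x)).card with hf
  have hmono : ∀ b ∈ T, ∀ c ∈ T, leftOf r b c → f c < f b := by
    intro b hb c hc hbc
    apply Finset.card_lt_card
    constructor
    · intro x hx
      rw [Finset.mem_filter] at hx ⊢
      exact ⟨hx.1, htrans b hb c hc x hx.1 hbc hx.2⟩
    · intro hsub
      have hc1 : c ∈ T.filter (fun x => leftOf r b x) :=
        Finset.mem_filter.mpr ⟨hc, hbc⟩
      have := Finset.mem_filter.mp (hsub hc1)
      exact hirr c this.2
  have hinj : Set.InjOn f T := by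
    intro b hb c hc hfe
    by_contra hne
    rcases htri b hb c hc hne with h | h
    · have := hmono b hb c hc h; omega
    · have := hmono c hc b hb h; omega
  have hbound : ∀ b ∈ T, f b < n - 1 := by
    intro b hb
    have hsub : T.filter (fun x => leftOf r b x) ⊆ T.erase b := by
      intro x hx
      rw [Finset.mem_filter] at hx
      refine Finset.mem_erase.mpr ⟨?_, hx.1⟩
      intro hxb; subst hxb; exact hirr x hx.2
    have := Finset.card_le_card hsub
    rw [Finset.card_erase_of_mem hb, hTcard] at this
    simp only [hf] at this ⊢
    omega
  -- image of f on T is exactly range (n-1)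
  have himage : T.image f = Finset.range (n - 1) := by
    apply Finset.eq_of_subset_of_card_le
    · intro m hm
      rw [Finset.mem_image] at hm
      obtain ⟨b, hb, rfl⟩ := hm
      exact Finset.mem_range.mpr (hbound b hb)
    · rw [Finset.card_range, Finset.card_image_of_injOn hinj, hTcard]
  have hjmem : j ∈ T.image f := by
    rw [himage, Finset.mem_range]; omega
  rw [Finset.mem_image] at hjmem
  obtain ⟨b, hbT, hbj⟩ := hjmem
  refine ⟨r, hrS, b, hTS b hbT, Ne.symm (hTr b hbT), ?_⟩
  have hset : {x ∈ (S : Set Pt) | leftOf r b x}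
      = ((T.filter (fun x => leftOf r b x) : Finset Pt) : Set Pt) := by
    ext x
    simp only [Set.mem_setOf_eq, Finset.coe_filter, Finset.mem_coe]
    constructor
    · rintro ⟨hxS, hxl⟩
      refine ⟨Finset.mem_erase.mpr ⟨?_, hxS⟩, hxl⟩
      intro hxr
      subst hxr
      unfold leftOf at hxl
      nlinarith [hxl]
    · rintro ⟨hxT, hxl⟩
      exact ⟨hTS x hxT, hxl⟩
  rw [hset, Set.ncard_coe_finset]
  exact hbj
end
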